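/- arXiv:2310.05579 — 4 statements merged into one kernel-verified Lean document; each statement's English description precedes it below -/
import Mathlib

section
/- Let G be a finite group and H ≤ G a subgroup with a linear character β of H such that the induced character β^G is a faithful irreducible character of G with β^G(1) = m(G). Then G is metabelian, i.e., G'' = 1. -/
open scoped BigOperators
open CategoryTheory

noncomputable section

/-- `χ : G → ℂ` is the character of some finite-dimensional complex representation. -/
def IsChar (G : Type) [Group G] (χ : G → ℂ) : Prop :=
  ∃ V : FDRep ℂ G, χ = V.character

/-- `χ : G → ℂ` is the character of an irreducible (simple) finite-dimensional
complex representation. -/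
def IsIrrChar (G : Type) [Group G] (χ : G → ℂ) : Prop :=
  ∃ V : FDRep ℂ G, Simple V ∧ χ = V.character

/-- The minimal degree `m(G)` of a non-linear irreducible complex character of `G`. -/
def minDeg (G : Type) [Group G] : ℕ :=
  sInf {n : ℕ | 1 < n ∧ ∃ χ : G → ℂ, IsIrrChar G χ ∧ χ 1 = (n : ℂ)}

/-- The kernel of a character, as a set: `{g | χ g = χ 1}`. -/
def charKerSet {G : Type} [Group G] (χ : G → ℂ) : Set G := {g | χ g = χ 1}

/-- The kernel of (the representation affording) a character, as a subgroup. -/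
def repKer {G : Type} [Group G] (V : FDRep ℂ G) : Subgroup G :=
  (Representation.asGroupHom V.ρ).ker

instance {G : Type} [Group G] (V : FDRep ℂ G) : (repKer V).Normal :=
  (Representation.asGroupHom V.ρ).normal_ker

open Classical in
/-- The character of `G` induced from the class function `β` of the subgroup `H`. -/
def indChar {G : Type} [Group G] [Fintype G] (H : Subgroup G) (β : H → ℂ) : G → ℂ :=
  fun g => (Nat.card H : ℂ)⁻¹ *
    ∑ x : G, if h : x⁻¹ * g * x ∈ H then β ⟨x⁻¹ * g * x, h⟩ else 0

/-- A character of `G` is primitive if it is not induced from a character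
of a proper subgroup. -/
def IsPrimitiveChar (G : Type) [Group G] [Fintype G] (χ : G → ℂ) : Prop :=
  ∀ H : Subgroup G, H ≠ ⊤ → ∀ β : H → ℂ, IsChar H β → indChar H β ≠ χ

/-- The usual inner product of class functions. -/
def charInner (G : Type) [Group G] [Fintype G] (φ ψ : G → ℂ) : ℂ :=
  (Nat.card G : ℂ)⁻¹ * ∑ g : G, φ g * (starRingEnd ℂ) (ψ g)

/-- `χ` is a sum of linear characters of `G`. -/
def IsSumOfLinear (G : Type) [Group G] (χ : G → ℂ) : Prop :=
  ∃ s : Multiset (G → ℂ), (∀ β ∈ s, IsChar G β ∧ β 1 = 1) ∧ χ = s.sum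

/-- The Fitting subgroup: the join of all nilpotent normal subgroups. -/
def fittingSubgroup (G : Type) [Group G] : Subgroup G :=
  ⨆ (N : Subgroup G) (_ : N.Normal) (_ : Group.IsNilpotent N), N

/-- `O_p(G)`: the join of all normal `p`-subgroups. -/
def pCore (p : ℕ) (G : Type) [Group G] : Subgroup G :=
  ⨆ (N : Subgroup G) (_ : N.Normal) (_ : IsPGroup p N), N

/-- An extraspecial `p`-group: `Z(P) = P' = Φ(P)` has order `p`. -/
def IsExtraspecial (p : ℕ) (P : Type) [Group P] : Prop :=
  IsPGroup p P ∧ Subgroup.center P = commutator P ∧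
    Subgroup.center P = frattini P ∧ Nat.card (Subgroup.center P) = p

namespace StmtAux

variable {G : Type} [Group G]

/-- invariance of a subspace under a representation -/
def IsInvt {V : Type} [AddCommGroup V] [Module ℂ V] (ρ : Representation ℂ G V)
    (p : Submodule ℂ V) : Prop := ∀ g : G, ∀ v ∈ p, ρ g v ∈ p

/-- restriction of a representation to an invariant subspace -/
def subRep {V : Type} [AddCommGroup V] [Module ℂ V] (ρ : Representation ℂ G V)
    (p : Submodule ℂ V) (hp : IsInvt ρ p) : Representation ℂ G p where
  toFun g := (ρ g).restrict (fun v hv => hp g v hv)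
  map_one' := by ext v; simp [LinearMap.restrict_apply]
  map_mul' g h := by ext v; simp [LinearMap.restrict_apply]

@[simp] lemma subRep_apply {V : Type} [AddCommGroup V] [Module ℂ V] (ρ : Representation ℂ G V)
    (p : Submodule ℂ V) (hp : IsInvt ρ p) (g : G) (v : p) :
    (subRep ρ p hp g v : V) = ρ g (v : V) := rfl

variable {G : Type} [Group G]

/-- inclusion of an invariant subspace as a morphism of `FDRep`s -/
def inclHom (Y : FDRep ℂ G) (K : Submodule ℂ Y) (hK : IsInvt Y.ρ K) :
    FDRep.of (subRep Y.ρ K hK) ⟶ Y :=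
  ⟨ConcreteCategory.ofHom K.subtype, fun g => rfl⟩

lemma comm_apply {X Y : FDRep ℂ G} (f : Y ⟶ X) (g : G) (v : Y) :
    f.hom (Y.ρ g v) = X.ρ g (f.hom v) :=
  ConcreteCategory.congr_hom (f.comm g) v

lemma mono_inj {X Y : FDRep ℂ G} (f : Y ⟶ X) [Mono f] :
    Function.Injective f.hom := by
  rw [← LinearMap.ker_eq_bot]
  set K : Submodule ℂ Y := LinearMap.ker f.hom.hom.hom with hKdef
  have hK : IsInvt Y.ρ K := by
    intro g v hv
    have hv' : f.hom v = 0 := hv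
    show f.hom (Y.ρ g v) = 0
    rw [comm_apply f g v, hv', map_zero]
  have h0 : inclHom Y K hK ≫ f = 0 ≫ f := by
    rw [CategoryTheory.Limits.zero_comp]
    apply Action.hom_ext
    apply FGModuleCat.hom_ext
    apply LinearMap.ext
    rintro ⟨v, hv⟩
    exact hv
  have heq := (cancel_mono f).mp h0
  have h3 : (inclHom Y K hK).hom = (0 : FDRep.of (subRep Y.ρ K hK) ⟶ Y).hom :=
    congrArg _ heq
  rw [Action.zero_hom] at h3
  rw [eq_bot_iff]
  intro v hv
  exact ConcreteCategory.congr_hom h3 ⟨v, hv⟩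


variable {G : Type} [Group G] {V : Type} [AddCommGroup V] [Module ℂ V] [FiniteDimensional ℂ V]

lemma simple_subRep (ρ : Representation ℂ G V) (p : Submodule ℂ V) (hp : IsInvt ρ p)
    (hne : p ≠ ⊥) (hmin : ∀ q, IsInvt ρ q → q ≤ p → q = ⊥ ∨ q = p) :
    Simple (FDRep.of (subRep ρ p hp)) := by
  constructor
  intro Y f hf
  constructor
  · intro hiso hf0
    obtain ⟨v, hv, hv0⟩ := Submodule.exists_mem_ne_zero_of_ne_bot hne
    have h1 : CategoryTheory.inv f ≫ f = 𝟙 (FDRep.of (subRep ρ p hp)) := IsIso.inv_hom_id f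
    have hfh : f.hom = 0 := by rw [hf0]; rfl
    have h2 := congrArg Action.Hom.hom h1
    rw [Action.comp_hom, hfh] at h2
    have h3 := ConcreteCategory.congr_hom h2 (⟨v, hv⟩ : p)
    have h4 : (⟨v, hv⟩ : p) = 0 := h3.symm
    exact hv0 (congrArg Subtype.val h4)
  · intro hf0
    have hinj : Function.Injective f.hom := mono_inj f
    let F : ↥Y.V →ₗ[ℂ] ↥p := f.hom.hom.hom
    have hFinj : Function.Injective F := hinj
    set q : Submodule ℂ V := (LinearMap.range F).map p.subtype with hq
    have hqinv : IsInvt ρ q := by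
      rintro g v ⟨w, ⟨y, rfl⟩, rfl⟩
      refine ⟨F (Y.ρ g y), ⟨Y.ρ g y, rfl⟩, ?_⟩
      have : F (Y.ρ g y) = (subRep ρ p hp) g (F y) := comm_apply f g y
      rw [this]
      rfl
    have hqle : q ≤ p := by
      rintro v ⟨w, _, rfl⟩; exact w.2
    rcases hmin q hqinv hqle with hbot | htop
    · exfalso
      apply hf0
      apply Action.hom_ext
      apply FGModuleCat.hom_ext
      apply LinearMap.ext
      intro y
      have hmem : ((F y : p) : V) ∈ q := ⟨F y, ⟨y, rfl⟩, rfl⟩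
      rw [hbot] at hmem
      exact Subtype.ext hmem
    · have hsurj : Function.Surjective F := by
        intro x
        have hx : (x : V) ∈ q := by rw [htop]; exact x.2
        obtain ⟨w, ⟨y, rfl⟩, hwx⟩ := hx
        exact ⟨y, Subtype.ext hwx⟩
      let e := LinearEquiv.ofBijective F ⟨hFinj, hsurj⟩
      have : IsIso f.hom := by
        refine ⟨⟨ConcreteCategory.ofHom (e.symm.toLinearMap : ↥p →ₗ[ℂ] ↥Y.V), ?_, ?_⟩⟩
        · apply FGModuleCat.hom_ext; apply LinearMap.ext; intro y; exact e.symm_apply_apply y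
        · apply FGModuleCat.hom_ext; apply LinearMap.ext; intro x; exact e.apply_symm_apply x
      exact Action.isIso_of_hom_isIso f


variable {G : Type} [Group G] {V : Type} [AddCommGroup V] [Module ℂ V]

/-- an invariant subspace as a submodule over the monoid algebra -/
def invtToA (ρ : Representation ℂ G V) (p : Submodule ℂ V) (hp : IsInvt ρ p) :
    Submodule (MonoidAlgebra ℂ G) ρ.asModule where
  carrier := {x | ρ.asModuleEquiv x ∈ p}
  add_mem' := by intro a b ha hb; simp only [Set.mem_setOf_eq, map_add] at *; exact add_mem ha hb
  zero_mem' := by simp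
  smul_mem' := by
    intro r x hx
    simp only [Set.mem_setOf_eq] at *
    rw [Representation.asModuleEquiv_map_smul]
    set v := ρ.asModuleEquiv x with hv
    induction r using MonoidAlgebra.induction_linear with
    | zero => simp
    | add f g hf hg => rw [map_add, LinearMap.add_apply]; exact add_mem hf hg
    | single g c =>
      rw [Representation.asAlgebraHom_single]
      exact Submodule.smul_mem _ _ (hp g v hx)

lemma mem_invtToA (ρ : Representation ℂ G V) (p : Submodule ℂ V) (hp : IsInvt ρ p)
    (x : ρ.asModule) : x ∈ invtToA ρ p hp ↔ ρ.asModuleEquiv x ∈ p := Iff.rfl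

/-- a monoid-algebra submodule as an invariant subspace -/
def aToInvt (ρ : Representation ℂ G V) (q : Submodule (MonoidAlgebra ℂ G) ρ.asModule) :
    Submodule ℂ V where
  carrier := {v | ρ.asModuleEquiv.symm v ∈ q}
  add_mem' := by intro a b ha hb; simp only [Set.mem_setOf_eq, map_add] at *; exact add_mem ha hb
  zero_mem' := by simp
  smul_mem' := by
    intro c v hv
    simp only [Set.mem_setOf_eq] at *
    rw [Representation.asModuleEquiv_symm_map_smul]
    exact Submodule.smul_mem _ _ hv

lemma mem_aToInvt (ρ : Representation ℂ G V) (q : Submodule (MonoidAlgebra ℂ G) ρ.asModule)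
    (v : V) : v ∈ aToInvt ρ q ↔ ρ.asModuleEquiv.symm v ∈ q := Iff.rfl

lemma aToInvt_isInvt (ρ : Representation ℂ G V) (q : Submodule (MonoidAlgebra ℂ G) ρ.asModule) :
    IsInvt ρ (aToInvt ρ q) := by
  intro g v hv
  rw [mem_aToInvt, Representation.asModuleEquiv_symm_map_rho]
  exact Submodule.smul_mem _ _ hv


open Module
variable {G : Type} [Group G] [Fintype G]
  {V : Type} [AddCommGroup V] [Module ℂ V] [FiniteDimensional ℂ V]

lemma sup_lines_eq_top (ρ : Representation ℂ G V)
    (h1 : ∀ r : Submodule ℂ V, IsInvt ρ r → r ≠ ⊥ →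
      (∀ s, IsInvt ρ s → s ≤ r → s = ⊥ ∨ s = r) → finrank ℂ r = 1) :
    (⨆ p : {p : Submodule ℂ V // IsInvt ρ p ∧ finrank ℂ p = 1}, (p : Submodule ℂ V)) = ⊤ := by
  set N := ⨆ p : {p : Submodule ℂ V // IsInvt ρ p ∧ finrank ℂ p = 1}, (p : Submodule ℂ V)
    with hNdef
  have hNinv : IsInvt ρ N := by
    intro g v hv
    refine Submodule.iSup_induction (motive := fun w => ρ g w ∈ N)
      _ hv (fun i x hx => ?_) (by simp) (fun x y hx hy => ?_)
    · exact le_iSup (fun p : {p : Submodule ℂ V // IsInvt ρ p ∧ finrank ℂ p = 1} =>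
        (p : Submodule ℂ V)) i (i.2.1 g x hx)
    · show ρ g (x + y) ∈ N
      rw [map_add]; exact add_mem hx hy
  by_contra hN
  haveI : NeZero ((Fintype.card G : ℂ)) := ⟨by exact_mod_cast Fintype.card_ne_zero⟩
  obtain ⟨q, hq⟩ := MonoidAlgebra.Submodule.exists_isCompl (invtToA ρ N hNinv)
  set q' : Submodule ℂ V := aToInvt ρ q with hq'def
  have hq'inv : IsInvt ρ q' := aToInvt_isInvt ρ q
  have hq'ne : q' ≠ ⊥ := by
    intro hbot
    apply hN
    have hqbot : q = ⊥ := by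
      rw [eq_bot_iff]
      intro x hx
      have : ρ.asModuleEquiv x ∈ q' := by
        rw [mem_aToInvt]; simpa using hx
      rw [hbot] at this
      have h0 : ρ.asModuleEquiv x = 0 := this
      simpa using congrArg ρ.asModuleEquiv.symm h0
    have htop : invtToA ρ N hNinv = ⊤ := by
      have := hq.sup_eq_top
      rw [hqbot, sup_bot_eq] at this
      exact this
    rw [eq_top_iff]
    intro v _
    have : ρ.asModuleEquiv.symm v ∈ invtToA ρ N hNinv := htop ▸ Submodule.mem_top
    rw [mem_invtToA] at this
    simpa using this
  -- find a minimal nonzero invariant subspace inside q'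
  set T : Set ℕ := {n | ∃ r : Submodule ℂ V, (IsInvt ρ r ∧ r ≠ ⊥ ∧ r ≤ q') ∧ finrank ℂ r = n}
    with hT
  have hTne : T.Nonempty := ⟨finrank ℂ q', q', ⟨hq'inv, hq'ne, le_rfl⟩, rfl⟩
  obtain ⟨r, ⟨hrinv, hrne, hrle⟩, hrn⟩ := Nat.sInf_mem hTne
  have hrmin : ∀ s, IsInvt ρ s → s ≤ r → s = ⊥ ∨ s = r := by
    intro s hsinv hsle
    by_cases hs : s = ⊥
    · exact Or.inl hs
    · right
      have hmem : finrank ℂ s ∈ T := ⟨s, ⟨hsinv, hs, hsle.trans hrle⟩, rfl⟩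
      have h1' : sInf T ≤ finrank ℂ s := Nat.sInf_le hmem
      rw [← hrn] at h1'
      exact Submodule.eq_of_le_of_finrank_le hsle h1'
  have hr1 : finrank ℂ r = 1 := h1 r hrinv hrne hrmin
  -- r is a line, so r ≤ N, but r ≤ q' and N ⊓ q' = ⊥
  have hrN : r ≤ N := le_iSup (fun p : {p : Submodule ℂ V // IsInvt ρ p ∧ finrank ℂ p = 1} =>
    (p : Submodule ℂ V)) ⟨r, hrinv, hr1⟩
  apply hrne
  rw [eq_bot_iff]
  intro v hv
  have hvN : v ∈ N := hrN hv
  have hvq' : v ∈ q' := hrle hv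
  have : ρ.asModuleEquiv.symm v ∈ invtToA ρ N hNinv ⊓ q := by
    constructor
    · show ρ.asModuleEquiv.symm v ∈ invtToA ρ N hNinv
      rw [mem_invtToA]; simpa using hvN
    · exact hvq'
  rw [hq.inf_eq_bot] at this
  have h0 : ρ.asModuleEquiv.symm v = 0 := this
  simpa using congrArg ρ.asModuleEquiv h0


open Module
variable {G : Type} [Group G]
  {V : Type} [AddCommGroup V] [Module ℂ V] [FiniteDimensional ℂ V]

lemma line_scalar (ρ : Representation ℂ G V) (p : Submodule ℂ V) (hp : IsInvt ρ p)
    (hdim : finrank ℂ p = 1) (g : G) : ∃ c : ℂ, ∀ v ∈ p, ρ g v = c • v := by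
  obtain ⟨u, hu0, hspan⟩ := finrank_eq_one_iff'.mp hdim
  -- u : ↥p, nonzero, spanning
  obtain ⟨c, hc⟩ := hspan ⟨ρ g u, hp g u u.2⟩
  refine ⟨c, fun v hv => ?_⟩
  obtain ⟨t, ht⟩ := hspan ⟨v, hv⟩
  have h1 : ρ g v = t • (ρ g (u : V)) := by
    have : (v : V) = t • (u : V) := congrArg Subtype.val ht.symm
    rw [this, map_smul]
  have h2 : (ρ g (u : V)) = c • (u : V) := congrArg Subtype.val hc.symm
  have h3 : (v : V) = t • (u : V) := congrArg Subtype.val ht.symm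
  rw [h1, h2, h3, smul_smul, smul_smul, mul_comm]

lemma commutator_fixes_line (ρ : Representation ℂ G V) (p : Submodule ℂ V) (hp : IsInvt ρ p)
    (hdim : finrank ℂ p = 1) (a b : G) : ∀ v ∈ p, ρ (a * b * a⁻¹ * b⁻¹) v = v := by
  obtain ⟨ca, hca⟩ := line_scalar ρ p hp hdim a
  obtain ⟨cb, hcb⟩ := line_scalar ρ p hp hdim b
  obtain ⟨ca', hca'⟩ := line_scalar ρ p hp hdim a⁻¹
  obtain ⟨cb', hcb'⟩ := line_scalar ρ p hp hdim b⁻¹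
  have haa' : ∀ v ∈ p, (ca * ca') • v = v := by
    intro v hv
    have h1 : ρ a (ρ a⁻¹ v) = v := by
      rw [← Module.End.mul_apply, ← map_mul, mul_inv_cancel, map_one, Module.End.one_apply]
    rw [hca' v hv, map_smul, hca v hv, smul_smul, mul_comm ca' ca] at h1
    exact h1
  have hbb' : ∀ v ∈ p, (cb * cb') • v = v := by
    intro v hv
    have h1 : ρ b (ρ b⁻¹ v) = v := by
      rw [← Module.End.mul_apply, ← map_mul, mul_inv_cancel, map_one, Module.End.one_apply]
    rw [hcb' v hv, map_smul, hcb v hv, smul_smul, mul_comm cb' cb] at h1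
    exact h1
  intro v hv
  have m1 : ρ b⁻¹ v = cb' • v := hcb' v hv
  have mem1 : ρ b⁻¹ v ∈ p := hp _ v hv
  have m2 : ρ a⁻¹ (ρ b⁻¹ v) = ca' • ρ b⁻¹ v := hca' _ mem1
  have mem2 : ρ a⁻¹ (ρ b⁻¹ v) ∈ p := hp _ _ mem1
  have m3 : ρ b (ρ a⁻¹ (ρ b⁻¹ v)) = cb • ρ a⁻¹ (ρ b⁻¹ v) := hcb _ mem2
  have mem3 : ρ b (ρ a⁻¹ (ρ b⁻¹ v)) ∈ p := hp _ _ mem2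
  have m4 : ρ a (ρ b (ρ a⁻¹ (ρ b⁻¹ v))) = ca • ρ b (ρ a⁻¹ (ρ b⁻¹ v)) := hca _ mem3
  have key : ρ (a * b * a⁻¹ * b⁻¹) v = ρ a (ρ b (ρ a⁻¹ (ρ b⁻¹ v))) := by
    simp only [map_mul, Module.End.mul_apply]
  have hs : ca • cb • ca' • cb' • v = (ca * ca') • ((cb * cb') • v) := by
    rw [smul_smul, smul_smul, smul_smul, smul_smul]
    congr 1
    ring
  rw [key, m4, m3, m2, m1, hs, hbb' v hv]
  exact haa' v hv


open Module

lemma trace_comp_one_dim {W : Type} [AddCommGroup W] [Module ℂ W] [Module.Finite ℂ W]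
    [Module.Free ℂ W] (h : finrank ℂ W = 1) (f g : W →ₗ[ℂ] W) :
    LinearMap.trace ℂ W (f ∘ₗ g) = LinearMap.trace ℂ W f * LinearMap.trace ℂ W g := by
  let b : Basis (Fin 1) ℂ W := Module.finBasisOfFinrankEq ℂ W h
  rw [LinearMap.trace_eq_matrix_trace ℂ b, LinearMap.trace_eq_matrix_trace ℂ b,
    LinearMap.trace_eq_matrix_trace ℂ b, LinearMap.toMatrix_comp b b b]
  simp [Matrix.trace, Matrix.mul_apply, Fin.sum_univ_one]

lemma char_mul_of_one_dim {H : Type} [Group H] (Vβ : FDRep ℂ H)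
    (h1 : Vβ.character 1 = 1) (s t : H) :
    Vβ.character (s * t) = Vβ.character s * Vβ.character t := by
  have hdim : finrank ℂ Vβ = 1 := by
    have := FDRep.char_one Vβ
    rw [h1] at this
    exact_mod_cast this.symm
  show LinearMap.trace ℂ _ (Vβ.ρ (s * t)) = _
  rw [map_mul]
  exact trace_comp_one_dim hdim (Vβ.ρ s) (Vβ.ρ t)


open Module
variable {G : Type} [Group G] [Fintype G] (H : Subgroup G)

instance permFD : FiniteDimensional ℂ (MonoidAlgebra ℂ (G ⧸ H)) :=
  Module.Finite.equiv (MonoidAlgebra.coeffLinearEquiv ℂ).symm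

lemma finrank_perm : finrank ℂ (MonoidAlgebra ℂ (G ⧸ H)) = H.index := by
  haveI := Fintype.ofFinite (G ⧸ H)
  rw [(MonoidAlgebra.coeffLinearEquiv ℂ).finrank_eq, Module.finrank_finsupp, finrank_self, mul_one, ← Nat.card_eq_fintype_card]
  rfl

/-- the constant-1 vector in the permutation module -/
def permOne : MonoidAlgebra ℂ (G ⧸ H) :=
  MonoidAlgebra.ofCoeff (Finsupp.equivFunOnFinite.symm (fun _ => (1 : ℂ)))

lemma permOne_apply (x : G ⧸ H) : (permOne H).coeff x = 1 := by
  simp [permOne]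

lemma permOne_ne_zero : permOne H ≠ 0 := by
  intro h
  have := permOne_apply H ((1 : G) : G ⧸ H)
  rw [h] at this
  simp at this

lemma permRep_fix_permOne (g : G) :
    Representation.ofMulAction ℂ G (G ⧸ H) g (permOne H) = permOne H := by
  ext x
  rw [Representation.coeff_ofMulAction, permOne_apply, permOne_apply]

/-- the trivial line in the permutation module -/
def permLine : Submodule ℂ (MonoidAlgebra ℂ (G ⧸ H)) := Submodule.span ℂ {permOne H}

lemma permLine_invt : IsInvt (Representation.ofMulAction ℂ G (G ⧸ H)) (permLine H) := by
  intro g v hv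
  rw [permLine, Submodule.mem_span_singleton] at hv ⊢
  obtain ⟨t, rfl⟩ := hv
  exact ⟨t, by rw [map_smul, permRep_fix_permOne]⟩

lemma permLine_ne_bot : permLine H ≠ ⊥ := by
  intro h
  have : permOne H ∈ permLine H := Submodule.mem_span_singleton_self _
  rw [h, Submodule.mem_bot] at this
  exact permOne_ne_zero H this

lemma permLine_finrank : finrank ℂ (permLine H) = 1 :=
  finrank_span_singleton (permOne_ne_zero H)


end StmtAux


namespace StmtAux
open Module
variable {G : Type} [Group G] [Fintype G] (H : Subgroup G)

lemma minimal_invt_dim_one (hm2 : 2 ≤ minDeg G)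
    (hrank : finrank ℂ (MonoidAlgebra ℂ (G ⧸ H)) = minDeg G)
    (r : Submodule ℂ (MonoidAlgebra ℂ (G ⧸ H)))
    (hrinv : IsInvt (Representation.ofMulAction ℂ G (G ⧸ H)) r) (hrne : r ≠ ⊥)
    (hrmin : ∀ s, IsInvt (Representation.ofMulAction ℂ G (G ⧸ H)) s → s ≤ r → s = ⊥ ∨ s = r) :
    finrank ℂ r = 1 := by
  set ρ := Representation.ofMulAction ℂ G (G ⧸ H) with hρ
  by_contra hne1
  have hd0 : finrank ℂ r ≠ 0 := fun h0 => hrne (Submodule.finrank_eq_zero.mp h0)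
  have hd2 : 2 ≤ finrank ℂ r := by omega
  have hS : minDeg G ≤ finrank ℂ r := by
    apply Nat.sInf_le
    refine ⟨hd2, (FDRep.of (subRep ρ r hrinv)).character,
      ⟨_, simple_subRep ρ r hrinv hrne hrmin, rfl⟩, ?_⟩
    rw [FDRep.char_one]
  have hle : finrank ℂ r ≤ minDeg G := hrank ▸ Submodule.finrank_le r
  have heq : finrank ℂ r = minDeg G := le_antisymm hle hS
  have hrtop : r = ⊤ := by
    apply Submodule.eq_of_le_of_finrank_le le_top
    rw [finrank_top, hrank, ← heq]
  rcases hrmin (permLine H) (permLine_invt H) (by rw [hrtop]; exact le_top) with hb | ht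
  · exact permLine_ne_bot H hb
  · have := permLine_finrank H
    rw [ht, heq] at this
    omega

lemma commutator_smul_fixed (hm2 : 2 ≤ minDeg G)
    (hrank : finrank ℂ (MonoidAlgebra ℂ (G ⧸ H)) = minDeg G) :
    ∀ g ∈ commutator G, ∀ z : G ⧸ H, g • z = z := by
  set ρ := Representation.ofMulAction ℂ G (G ⧸ H) with hρ
  have htop := sup_lines_eq_top ρ (minimal_invt_dim_one H hm2 hrank)
  have hker : commutator G ≤ (MulAction.toPermHom G (G ⧸ H)).ker := by
    rw [commutator_def, Subgroup.commutator_le]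
    intro a _ b _
    rw [MonoidHom.mem_ker]
    apply Equiv.ext
    intro z
    have hfix : ρ (a * b * a⁻¹ * b⁻¹) (MonoidAlgebra.single z 1) = MonoidAlgebra.single z 1 := by
      set F := LinearMap.eqLocus (ρ (a * b * a⁻¹ * b⁻¹)) LinearMap.id with hF
      have hFtop : ⊤ ≤ F := by
        rw [← htop]
        apply iSup_le
        rintro ⟨p, hpinv, hp1⟩
        intro w hw
        have := commutator_fixes_line ρ p hpinv hp1 a b w hw
        simpa [hF, LinearMap.mem_eqLocus] using this
      have hmem : MonoidAlgebra.single z (1 : ℂ) ∈ F := hFtop Submodule.mem_top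
      simpa [hF, LinearMap.mem_eqLocus] using hmem
    have h2 : MonoidAlgebra.single ((a * b * a⁻¹ * b⁻¹) • z) (1 : ℂ) = MonoidAlgebra.single z 1 := by
      rw [← Representation.ofMulAction_single]
      exact hfix
    rcases (Finsupp.single_eq_single_iff _ _ _ _).mp (congrArg MonoidAlgebra.coeff h2) with ⟨h, _⟩ | ⟨h, _⟩
    · simpa [MulAction.toPermHom, commutatorElement_def] using h
    · exact absurd h one_ne_zero
  intro g hg z
  have hmem := hker hg
  rw [MonoidHom.mem_ker] at hmem
  have := congrArg (fun (e : Equiv.Perm (G ⧸ H)) => e z) hmem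
  simpa [MulAction.toPermHom] using this

lemma commutator_conj_mem (hm2 : 2 ≤ minDeg G)
    (hrank : finrank ℂ (MonoidAlgebra ℂ (G ⧸ H)) = minDeg G) :
    ∀ g ∈ commutator G, ∀ x : G, x⁻¹ * g * x ∈ H := by
  intro g hg x
  have h1 : g • ((x : G) : G ⧸ H) = ((x : G) : G ⧸ H) :=
    commutator_smul_fixed H hm2 hrank g hg _
  have h2 : ((g * x : G) : G ⧸ H) = ((x : G) : G ⧸ H) := by
    rw [← h1]; rfl
  rw [QuotientGroup.eq] at h2
  have h3 : (g * x)⁻¹ * x = x⁻¹ * g⁻¹ * x := by group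
  rw [h3] at h2
  have h4 : x⁻¹ * g * x = (x⁻¹ * g⁻¹ * x)⁻¹ := by group
  rw [h4]
  exact inv_mem h2

end StmtAux

/-- If a faithful irreducible minimal character of `G` is induced from a linear
character of a subgroup, then `G` is metabelian. -/
theorem stmt6 (G : Type) [Group G] [Fintype G] (H : Subgroup G) (β : ↥H → ℂ)
    (hβ : IsChar ↥H β) (hlin : β 1 = 1)
    (hirr : IsIrrChar G (indChar H β)) (hfaith : charKerSet (indChar H β) = {(1 : G)})
    (hdeg : indChar H β 1 = (minDeg G : ℂ)) :
    derivedSeries G 2 = ⊥ := by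
  classical
  obtain ⟨Vβ, hVβ⟩ := hβ
  have hβmul : ∀ s t : ↥H, β (s * t) = β s * β t := by
    intro s t
    rw [hVβ]
    exact StmtAux.char_mul_of_one_dim Vβ (by rw [← hVβ]; exact hlin) s t
  have hcardH : 0 < Nat.card ↥H := Nat.card_pos
  have hterm1 : ∀ x : G,
      (if h : x⁻¹ * 1 * x ∈ H then β ⟨x⁻¹ * 1 * x, h⟩ else 0) = 1 := by
    intro x
    have he : x⁻¹ * 1 * x = 1 := by group
    have hx : x⁻¹ * 1 * x ∈ H := by rw [he]; exact H.one_mem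
    rw [dif_pos hx]
    have e2 : (⟨x⁻¹ * 1 * x, hx⟩ : ↥H) = 1 := by
      apply Subtype.ext
      exact he
    rw [e2, hlin]
  have hchi1 : indChar H β 1 = (Nat.card ↥H : ℂ)⁻¹ * (Fintype.card G : ℂ) := by
    show (Nat.card ↥H : ℂ)⁻¹ * _ = _
    congr 1
    rw [Finset.sum_congr rfl (fun x _ => hterm1 x), Finset.sum_const, Finset.card_univ]
    simp
  have hH0 : (Nat.card ↥H : ℂ) ≠ 0 := Nat.cast_ne_zero.mpr hcardH.ne'
  have hGm : (Fintype.card G : ℂ) = (minDeg G : ℂ) * (Nat.card ↥H : ℂ) := by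
    have h := hdeg
    rw [hchi1] at h
    field_simp at h
    rw [h, Nat.card_eq_fintype_card, mul_comm]
  have hGmN : Fintype.card G = minDeg G * Nat.card ↥H := by exact_mod_cast hGm
  have hidx : H.index = minDeg G := by
    have hmul : Nat.card ↥H * H.index = Nat.card G := Subgroup.card_mul_index H
    rw [Nat.card_eq_fintype_card (α := G), hGmN] at hmul
    have : Nat.card ↥H * H.index = Nat.card ↥H * minDeg G := by
      rw [hmul]; ring
    exact Nat.eq_of_mul_eq_mul_left hcardH this
  have hidx0 : H.index ≠ 0 := Subgroup.index_ne_zero_of_finite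
  have hm2 : 2 ≤ minDeg G := by
    by_cases hne : {n : ℕ | 1 < n ∧ ∃ χ : G → ℂ, IsIrrChar G χ ∧ χ 1 = (n : ℂ)}.Nonempty
    · have hmem := Nat.sInf_mem hne
      have h1 : 1 < minDeg G := hmem.1
      omega
    · exfalso
      rw [Set.not_nonempty_iff_eq_empty] at hne
      apply hidx0
      rw [hidx]
      show sInf _ = 0
      rw [hne, Nat.sInf_empty]
  have hrank : Module.finrank ℂ (MonoidAlgebra ℂ (G ⧸ H)) = minDeg G := by
    rw [StmtAux.finrank_perm, hidx]
  have hconj := StmtAux.commutator_conj_mem H hm2 hrank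
  set Kβ : Subgroup ↥H :=
    { carrier := {h : ↥H | β h = 1}
      mul_mem' := by
        intro a b ha hb
        show β (a * b) = 1
        rw [hβmul]
        rw [show β a = 1 from ha, show β b = 1 from hb, mul_one]
      one_mem' := hlin
      inv_mem' := by
        intro a ha
        show β a⁻¹ = 1
        have h1 : β (a⁻¹ * a) = β a⁻¹ * β a := hβmul a⁻¹ a
        rw [inv_mul_cancel, hlin, show β a = 1 from ha, mul_one] at h1
        exact h1.symm } with hKβ
  have hβinv : ∀ a : ↥H, β a⁻¹ * β a = 1 := by
    intro a
    have h1 : β (a⁻¹ * a) = β a⁻¹ * β a := hβmul a⁻¹ a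
    rw [inv_mul_cancel, hlin] at h1
    exact h1.symm
  have hDS2le : derivedSeries G 2 ≤ Kβ.map H.subtype := by
    show ⁅derivedSeries G 1, derivedSeries G 1⁆ ≤ _
    rw [Subgroup.commutator_le]
    intro a ha b hb
    rw [derivedSeries_one] at ha hb
    have haH : a ∈ H := by
      have := hconj a ha 1
      simpa using this
    have hbH : b ∈ H := by
      have := hconj b hb 1
      simpa using this
    set a' : ↥H := ⟨a, haH⟩
    set b' : ↥H := ⟨b, hbH⟩
    refine ⟨a' * b' * a'⁻¹ * b'⁻¹, ?_, rfl⟩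
    show β (a' * b' * a'⁻¹ * b'⁻¹) = 1
    rw [hβmul, hβmul, hβmul]
    have : β a' * β b' * β a'⁻¹ * β b'⁻¹
        = (β a'⁻¹ * β a') * (β b'⁻¹ * β b') := by ring
    rw [this, hβinv, hβinv, mul_one]
  rw [eq_bot_iff]
  intro g hg
  have hker : g ∈ charKerSet (indChar H β) := by
    show indChar H β g = indChar H β 1
    have hterm : ∀ x : G,
        (if h : x⁻¹ * g * x ∈ H then β ⟨x⁻¹ * g * x, h⟩ else 0) = 1 := by
      intro x
      have hu : x⁻¹ * g * x ∈ derivedSeries G 2 := by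
        have := (derivedSeries_normal G 2).conj_mem g hg x⁻¹
        simpa using this
      obtain ⟨hh, hhK, hhval⟩ := hDS2le hu
      have hxH : x⁻¹ * g * x ∈ H := by rw [← hhval]; exact hh.2
      rw [dif_pos hxH]
      have e3 : (⟨x⁻¹ * g * x, hxH⟩ : ↥H) = hh := Subtype.ext hhval.symm
      rw [e3]
      exact hhK
    show (Nat.card ↥H : ℂ)⁻¹ * _ = (Nat.card ↥H : ℂ)⁻¹ * _
    congr 1
    rw [Finset.sum_congr rfl (fun x _ => hterm x),
      Finset.sum_congr rfl (fun x _ => hterm1 x)]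
  rw [hfaith] at hker
  exact hker

end
end

section
/- Let G be a finite group, H ≤ G, and β an irreducible character of H with β(1) > 1 such that β^G = χ is irreducible with χ(1) = m(G). Then H is normal in G and G' = H'. -/
open scoped BigOperators
open CategoryTheory

noncomputable section

set_option maxHeartbeats 1000000
set_option linter.unusedSectionVars false

section Aux
variable {G : Type} [Group G] [Fintype G]

def resRep {V : Type} [AddCommGroup V] [Module ℂ V] (ρ : Representation ℂ G V)
    (p : Submodule ℂ V) (hp : ∀ g : G, ∀ x ∈ p, ρ g x ∈ p) : Representation ℂ G ↥p where
  toFun g := (ρ g).restrict (hp g)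
  map_one' := by ext x; simp [LinearMap.restrict_apply]
  map_mul' g h := by ext x; simp [LinearMap.restrict_apply]

lemma fdrep_comm {X Y : FDRep ℂ G} (f : X ⟶ Y) (g : G) (x : ↑X.V) :
    f.hom (X.ρ g x) = Y.ρ g (f.hom x) := by
  have := f.comm g
  exact congrFun (congrArg (fun (h : X.V ⟶ Y.V) => (h : ↑X.V → ↑Y.V)) this) x

lemma simple_of_invariant {V : Type} [AddCommGroup V] [Module ℂ V] [FiniteDimensional ℂ V]
    (ρ : Representation ℂ G V) [Nontrivial V]
    (hs : ∀ p : Submodule ℂ V, (∀ g : G, ∀ x ∈ p, ρ g x ∈ p) → p = ⊥ ∨ p = ⊤) :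
    Simple (FDRep.of ρ) := by
  constructor
  intro Y f hf
  constructor
  · intro hiso h0
    obtain ⟨x, hx⟩ := exists_ne (0 : V)
    apply hx
    have h1 : (inv f ≫ f) = 𝟙 (FDRep.of ρ) := IsIso.inv_hom_id f
    have hx2 : f.hom ((inv f).hom x) = x :=
      congrFun (congrArg (fun (h : (FDRep.of ρ) ⟶ (FDRep.of ρ)) => ((h.hom : _ ⟶ _) : V → V)) h1) x
    have h0' : ∀ z : ↑Y.V, f.hom z = 0 := by
      intro z
      rw [h0]
      rfl
    rw [h0'] at hx2
    exact hx2.symm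
  · intro hne
    have hkerinv : ∀ g : G, ∀ x ∈ LinearMap.ker f.hom.hom.hom, Y.ρ g x ∈ LinearMap.ker f.hom.hom.hom := by
      intro g x hx
      simp only [LinearMap.mem_ker] at hx ⊢
      refine (fdrep_comm f g x).trans ?_
      rw [show (ConcreteCategory.hom f.hom) x = 0 from hx]
      simp
    let K : FDRep ℂ G := FDRep.of (resRep Y.ρ (LinearMap.ker f.hom.hom.hom) hkerinv)
    let ι : K ⟶ Y := ⟨ConcreteCategory.ofHom (LinearMap.ker f.hom.hom.hom).subtype, by intro g; ext x; rfl⟩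
    have hι : ι ≫ f = 0 ≫ f := by
      ext x
      have h2 : (0 ≫ f : K ⟶ FDRep.of ρ).hom x = 0 := by simp; rfl
      exact (x.2 : f.hom x.1 = 0).trans h2.symm
    have hι0 : ι = 0 := (cancel_mono f).mp hι
    have hker : LinearMap.ker f.hom.hom.hom = ⊥ := by
      ext x
      simp only [Submodule.mem_bot]
      constructor
      · intro hx
        have h2 : ι.hom ⟨x, hx⟩ = x := rfl
        rw [hι0] at h2
        exact h2.symm.trans rfl
      · intro hx; simp [hx]
    have hrinv : ∀ g : G, ∀ x ∈ LinearMap.range f.hom.hom.hom, ρ g x ∈ LinearMap.range f.hom.hom.hom := by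
      rintro g x ⟨y, rfl⟩
      exact ⟨Y.ρ g y, (fdrep_comm f g y)⟩
    have hrange : LinearMap.range f.hom.hom.hom = ⊤ := by
      rcases hs _ hrinv with h | h
      · exfalso
        apply hne
        ext x
        show f.hom x = ((0 : Y ⟶ FDRep.of ρ)).hom x
        have : f.hom x ∈ LinearMap.range f.hom.hom.hom := ⟨x, rfl⟩
        rw [h] at this
        exact ((Submodule.mem_bot ℂ).mp this).trans rfl
      · exact h
    have hbij : Function.Bijective f.hom :=
      ⟨by rw [← LinearMap.ker_eq_bot]; exact hker,
       by rw [← LinearMap.range_eq_top]; exact hrange⟩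
    let e : ↑Y.V ≃ₗ[ℂ] V := LinearEquiv.ofBijective f.hom.hom.hom hbij
    have hsymm : ∀ z : ↑Y.V, e.symm (f.hom z) = z := fun z => e.symm_apply_apply z
    have happ : ∀ z : V, f.hom (e.symm z) = z := fun z => e.apply_symm_apply z
    have hcomm : ∀ (g : G) (x : V), e.symm (ρ g x) = Y.ρ g (e.symm x) := by
      intro g x
      apply e.injective
      show f.hom _ = f.hom _
      rw [fdrep_comm f g (e.symm x), happ, happ]
      rfl
    refine ⟨⟨⟨ConcreteCategory.ofHom (e.symm : V →ₗ[ℂ] ↑Y.V), ?_⟩, ?_, ?_⟩⟩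
    · intro g
      ext x
      show e.symm (ρ g x) = Y.ρ g (e.symm x)
      exact hcomm g x
    · ext x
      show e.symm (f.hom x) = x
      exact hsymm x
    · ext x
      show f.hom (e.symm x) = x
      exact happ x

lemma lemA {V : Type} [AddCommGroup V] [Module ℂ V] [FiniteDimensional ℂ V]
    (ρ : Representation ℂ G V) (hdim : Module.finrank ℂ V < minDeg G) :
    ∀ g h : G, ∀ v : V, ρ g (ρ h v) = ρ h (ρ g v) := by
  letI modA : Module (MonoidAlgebra ℂ G) V := Module.compHom V (ρ.asAlgebraHom).toRingHom
  have hsmul : ∀ (a : MonoidAlgebra ℂ G) (v : V), a • v = ρ.asAlgebraHom a v := fun a v => rfl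
  have hsmulg : ∀ (g : G) (v : V), (MonoidAlgebra.of ℂ G g) • v = ρ g v := by
    intro g v; rw [hsmul, Representation.asAlgebraHom_of]
  haveI : NeZero ((Fintype.card G : ℂ)) := ⟨Nat.cast_ne_zero.mpr Fintype.card_ne_zero⟩
  haveI ss : IsSemisimpleModule (MonoidAlgebra ℂ G) V := inferInstance
  haveI : IsScalarTower ℂ (MonoidAlgebra ℂ G) V := ⟨fun c a v => by
    rw [hsmul, hsmul, map_smul]; rfl⟩
  intro g h
  have key : ∀ S : Submodule (MonoidAlgebra ℂ G) V, IsSimpleModule (MonoidAlgebra ℂ G) S →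
      ∀ v ∈ S, ρ g (ρ h v) = ρ h (ρ g v) := by
    intro S hS
    haveI : IsSimpleModule (MonoidAlgebra ℂ G) S := hS
    haveI hnt : Nontrivial ↥S := IsSimpleModule.nontrivial (MonoidAlgebra ℂ G) ↥S
    have hSinv : ∀ g' : G, ∀ x ∈ S, ρ g' x ∈ S := by
      intro g' x hx
      rw [← hsmulg g' x]
      exact S.smul_mem _ hx
    set T : Submodule ℂ V := S.restrictScalars ℂ with hT
    have hmemT : ∀ x : V, x ∈ T ↔ x ∈ S := fun x => Iff.rfl
    have hTinv : ∀ g' : G, ∀ x ∈ T, ρ g' x ∈ T := fun g' x hx => hSinv g' x hx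
    haveI hntT : Nontrivial ↥T := by
      obtain ⟨a, b, hab⟩ := hnt
      refine ⟨⟨a.1, a.2⟩, ⟨b.1, b.2⟩, fun hc => hab ?_⟩
      exact Subtype.ext (congrArg Subtype.val hc)
    have hrank : Module.finrank ℂ ↥T = 1 := by
      rcases Nat.lt_or_ge (Module.finrank ℂ ↥T) 2 with h2 | h2
      · have h0 : Module.finrank ℂ ↥T ≠ 0 := by
          intro h0
          rw [Submodule.finrank_eq_zero] at h0
          rw [h0] at hntT
          exact not_nontrivial _ hntT
        omega
      · exfalso
        have hsub : ∀ p : Submodule ℂ ↥T, (∀ g' : G, ∀ x ∈ p, resRep ρ T hTinv g' x ∈ p) →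
            p = ⊥ ∨ p = ⊤ := by
          intro p hp
          let q : Submodule (MonoidAlgebra ℂ G) V :=
            { carrier := (p.map T.subtype : Submodule ℂ V)
              add_mem' := fun ha hb => Submodule.add_mem _ ha hb
              zero_mem' := Submodule.zero_mem _
              smul_mem' := by
                intro a x hx
                rw [hsmul]
                have hexp : ρ.asAlgebraHom a x = a.coeff.sum fun g' r => r • ρ g' x := by
                  rw [Representation.asAlgebraHom_def, MonoidAlgebra.lift_apply,
                    Finsupp.sum, Finsupp.sum, LinearMap.coe_sum, Finset.sum_apply]
                  simp
                rw [hexp, Finsupp.sum]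
                apply Submodule.sum_mem
                intro c _
                apply Submodule.smul_mem
                obtain ⟨y, hy, rfl⟩ := hx
                exact ⟨resRep ρ T hTinv c y, hp c y hy, rfl⟩ }
          have hqmem : ∀ x : V, x ∈ q ↔ x ∈ p.map T.subtype := fun _ => Iff.rfl
          have hqle : q ≤ S := by
            intro x hx
            rw [hqmem] at hx
            obtain ⟨y, _, rfl⟩ := hx
            exact y.2
          have hatom : IsAtom S := isSimpleModule_iff_isAtom.mp hS
          have hinj := Submodule.map_injective_of_injective T.injective_subtype
          rcases lt_or_eq_of_le hqle with hlt | heq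
          · left
            have hqbot : q = ⊥ := hatom.2 q hlt
            have hmap : p.map T.subtype = ⊥ := by
              ext x
              rw [← hqmem x, hqbot]
              rfl
            have hb : p.map T.subtype = Submodule.map T.subtype ⊥ := by
              rw [hmap, Submodule.map_bot]
            exact hinj hb
          · right
            have hmap : p.map T.subtype = Submodule.map T.subtype ⊤ := by
              rw [Submodule.map_top, Submodule.range_subtype]
              ext x
              rw [← hqmem x, heq]
              exact (hmemT x).symm
            exact hinj hmap
        haveI hsimple : Simple (FDRep.of (resRep ρ T hTinv)) :=
          simple_of_invariant _ hsub
        have hle : minDeg G ≤ Module.finrank ℂ ↥T := by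
          apply Nat.sInf_le
          refine ⟨h2, (FDRep.of (resRep ρ T hTinv)).character,
            ⟨FDRep.of (resRep ρ T hTinv), hsimple, rfl⟩, ?_⟩
          rw [FDRep.char_one]
        have hle2 : Module.finrank ℂ ↥T ≤ Module.finrank ℂ V := Submodule.finrank_le T
        omega
    rw [finrank_eq_one_iff'] at hrank
    obtain ⟨v₀, hv₀, hspan⟩ := hrank
    have hvg : ∀ g' : G, ∃ c : ℂ, ρ g' (v₀ : V) = c • (v₀ : V) := by
      intro g'
      obtain ⟨c, hc⟩ := hspan ⟨ρ g' v₀, hTinv g' v₀ v₀.2⟩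
      exact ⟨c, (congrArg Subtype.val hc).symm⟩
    obtain ⟨cg, hcg⟩ := hvg g
    obtain ⟨ch, hch⟩ := hvg h
    intro v hv
    obtain ⟨a, ha⟩ := hspan ⟨v, hv⟩
    have hv' : v = a • (v₀ : V) := (congrArg Subtype.val ha).symm
    rw [hv']
    simp only [map_smul, hch, hcg, smul_smul]
    congr 1
    ring
  have htop := IsSemisimpleModule.sSup_simples_eq_top (MonoidAlgebra ℂ G) V
  intro v
  have hv : v ∈ sSup {S : Submodule (MonoidAlgebra ℂ G) V |
      IsSimpleModule (MonoidAlgebra ℂ G) S} := by rw [htop]; trivial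
  rw [sSup_eq_iSup'] at hv
  refine Submodule.iSup_induction _ (motive := fun v => ρ g (ρ h v) = ρ h (ρ g v)) hv ?_ ?_ ?_
  · rintro ⟨S, hS⟩ x hx
    exact key S hS x hx
  · simp
  · intro x y hx hy
    simp [map_add, hx, hy]

def transRep : Representation ℂ G (G → ℂ) where
  toFun g :=
    { toFun := fun f x => f (g⁻¹ * x)
      map_add' := fun f₁ f₂ => rfl
      map_smul' := fun c f => rfl }
  map_one' := by ext f x; simp
  map_mul' g₁ g₂ := by
    ext f x
    show f ((g₁ * g₂)⁻¹ * x) = f (g₂⁻¹ * (g₁⁻¹ * x))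
    rw [mul_inv_rev, mul_assoc]

def indSub (H : Subgroup G) (lam : ↥H →* ℂˣ) : Submodule ℂ (G → ℂ) where
  carrier := {f | ∀ (x : G) (h : ↥H), f (x * h) = f x * ((lam h : ℂˣ) : ℂ)}
  add_mem' := fun ha hb x h => by simp only [Pi.add_apply, ha x h, hb x h]; ring
  zero_mem' := fun x h => by simp
  smul_mem' := fun c f hf x h => by simp only [Pi.smul_apply, smul_eq_mul, hf x h]; ring

lemma indSub_inv (H : Subgroup G) (lam : ↥H →* ℂˣ) :
    ∀ g : G, ∀ f ∈ indSub H lam, transRep g f ∈ indSub H lam := by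
  intro g f hf x h
  show f (g⁻¹ * (x * h)) = f (g⁻¹ * x) * ((lam h : ℂˣ) : ℂ)
  rw [← mul_assoc]
  exact hf (g⁻¹ * x) h

lemma indSub_finrank (H : Subgroup G) (lam : ↥H →* ℂˣ) :
    Module.finrank ℂ ↥(indSub H lam) ≤ H.index := by
  haveI := Fintype.ofFinite (G ⧸ H)
  let Φ : ↥(indSub H lam) →ₗ[ℂ] ((G ⧸ H) → ℂ) :=
    { toFun := fun f c => (f : G → ℂ) (Quotient.out c)
      map_add' := fun a b => rfl
      map_smul' := fun c f => rfl }
  have hinj : Function.Injective Φ := by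
    intro f₁ f₂ hf
    apply Subtype.ext
    funext x
    obtain ⟨h, hx⟩ := QuotientGroup.mk_out_eq_mul H x
    have hxx : x = (QuotientGroup.mk x : G ⧸ H).out * ((h⁻¹ : ↥H) : G) := by
      rw [hx]
      simp [mul_assoc]
    have e1 := f₁.2 ((QuotientGroup.mk x : G ⧸ H).out) h⁻¹
    have e2 := f₂.2 ((QuotientGroup.mk x : G ⧸ H).out) h⁻¹
    have hout : (f₁ : G → ℂ) ((QuotientGroup.mk x : G ⧸ H).out)
        = (f₂ : G → ℂ) ((QuotientGroup.mk x : G ⧸ H).out) :=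
      congrFun hf (QuotientGroup.mk x)
    calc (f₁ : G → ℂ) x = (f₁ : G → ℂ) ((QuotientGroup.mk x : G ⧸ H).out * ((h⁻¹ : ↥H) : G)) := by
          rw [← hxx]
      _ = (f₁ : G → ℂ) ((QuotientGroup.mk x : G ⧸ H).out) * ((lam h⁻¹ : ℂˣ) : ℂ) := e1
      _ = (f₂ : G → ℂ) ((QuotientGroup.mk x : G ⧸ H).out) * ((lam h⁻¹ : ℂˣ) : ℂ) := by rw [hout]
      _ = (f₂ : G → ℂ) x := by rw [← e2, ← hxx]
  have hle := LinearMap.finrank_le_finrank_of_injective hinj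
  rw [Module.finrank_pi] at hle
  rwa [show Fintype.card (G ⧸ H) = H.index from (Nat.card_eq_fintype_card).symm] at hle

open Classical in
lemma keyLam (H : Subgroup G) (hidx : H.index < minDeg G) (lam : ↥H →* ℂˣ) :
    ∀ g ∈ commutator G, ∃ hg : g⁻¹ ∈ H, ((lam ⟨g⁻¹, hg⟩ : ℂˣ) : ℂ) = 1 := by
  set ρ := resRep transRep (indSub H lam) (indSub_inv H lam) with hρ
  have hdim : Module.finrank ℂ ↥(indSub H lam) < minDeg G :=
    lt_of_le_of_lt (indSub_finrank H lam) hidx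
  have hcomm := lemA ρ hdim
  have hker : commutator G ≤ (Representation.asGroupHom ρ).ker := by
    rw [commutator_def, Subgroup.commutator_le]
    intro a _ b _
    rw [MonoidHom.mem_ker, map_commutatorElement, commutatorElement_eq_one_iff_commute]
    apply Units.ext
    rw [Units.val_mul, Units.val_mul, Representation.asGroupHom_apply,
      Representation.asGroupHom_apply]
    exact LinearMap.ext fun v => hcomm a b v
  intro g hg
  have h1 : ρ g = 1 := by
    have := hker hg
    rw [MonoidHom.mem_ker] at this
    have h2 := Representation.asGroupHom_apply ρ g
    rw [this] at h2
    exact h2.symm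
  -- the test function
  set f₀ : G → ℂ := fun x => if hx : x ∈ H then ((lam ⟨x, hx⟩ : ℂˣ) : ℂ) else 0 with hf₀def
  have hf₀ : f₀ ∈ indSub H lam := by
    intro x h
    by_cases hx : x ∈ H
    · have hxh : x * ↑h ∈ H := H.mul_mem hx h.2
      rw [hf₀def]
      simp only
      rw [dif_pos hx, dif_pos hxh]
      have hprod : (⟨x * ↑h, hxh⟩ : ↥H) = ⟨x, hx⟩ * h := by
        apply Subtype.ext
        rfl
      rw [hprod, map_mul, Units.val_mul]
    · have hxh : ¬ (x * ↑h ∈ H) := by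
        intro hc
        apply hx
        have := H.mul_mem hc (H.inv_mem h.2)
        simpa [mul_assoc] using this
      rw [hf₀def]
      simp only
      rw [dif_neg hx, dif_neg hxh, zero_mul]
  have hfix : ρ g ⟨f₀, hf₀⟩ = ⟨f₀, hf₀⟩ := by rw [h1]; rfl
  have heval : f₀ (g⁻¹ * 1) = f₀ 1 := congrFun (congrArg Subtype.val hfix) 1
  have hone : f₀ 1 = 1 := by
    rw [hf₀def]
    simp only
    rw [dif_pos H.one_mem]
    have : (⟨(1 : G), H.one_mem⟩ : ↥H) = 1 := rfl
    rw [this, map_one, Units.val_one]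
  rw [mul_one, hone] at heval
  by_cases hgH : g⁻¹ ∈ H
  · refine ⟨hgH, ?_⟩
    rw [hf₀def] at heval
    simp only at heval
    rw [dif_pos hgH] at heval
    exact heval
  · exfalso
    rw [hf₀def] at heval
    simp only at heval
    rw [dif_neg hgH] at heval
    exact zero_ne_one heval

end Aux

/-- If `β ∈ Irr(H)` is non-linear and `β^G` is irreducible of degree `m(G)`, then
`H ⊴ G` and `G' = H'`. -/
theorem stmt7 (G : Type) [Group G] [Fintype G] (H : Subgroup G) (β : ↥H → ℂ)
    (hβ : IsIrrChar ↥H β) (d : ℕ) (hd : β 1 = (d : ℂ)) (hd1 : 1 < d)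
    (hirr : IsIrrChar G (indChar H β)) (hdeg : indChar H β 1 = (minDeg G : ℂ)) :
    H.Normal ∧ commutator G = (commutator ↥H).map H.subtype := by
  classical
  have hone : indChar H β 1 = ((H.index * d : ℕ) : ℂ) := by
    unfold indChar
    have hterm : ∀ x : G, (if h : x⁻¹ * 1 * x ∈ H then β ⟨x⁻¹ * 1 * x, h⟩ else 0) = (d : ℂ) := by
      intro x
      have hx : x⁻¹ * 1 * x = 1 := by group
      have h' : x⁻¹ * 1 * x ∈ H := by rw [hx]; exact H.one_mem
      rw [dif_pos h']
      have h2 : (⟨x⁻¹ * 1 * x, h'⟩ : ↥H) = 1 := Subtype.ext hx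
      rw [h2, hd]
    rw [Finset.sum_congr rfl (fun x _ => hterm x), Finset.sum_const, Finset.card_univ]
    have hHpos : (Nat.card ↥H : ℂ) ≠ 0 := Nat.cast_ne_zero.mpr Nat.card_pos.ne'
    have hcard : (Nat.card ↥H : ℂ) * (H.index : ℂ) = (Fintype.card G : ℂ) := by
      rw [← Nat.cast_mul, Subgroup.card_mul_index, Nat.card_eq_fintype_card]
    rw [nsmul_eq_mul]
    push_cast
    rw [← hcard]
    field_simp
  have hm : minDeg G = H.index * d := by
    have h2 : ((minDeg G : ℕ) : ℂ) = ((H.index * d : ℕ) : ℂ) := hdeg.symm.trans hone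
    exact_mod_cast h2
  have hidxpos : 0 < H.index := Nat.pos_of_ne_zero Subgroup.index_ne_zero_of_finite
  have hidx : H.index < minDeg G := by
    rw [hm]
    exact (Nat.lt_mul_iff_one_lt_right hidxpos).mpr hd1
  have key := fun lam => keyLam H hidx lam
  have hGH : commutator G ≤ H := by
    intro g hg
    obtain ⟨hg', _⟩ := key 1 g hg
    exact (H.inv_mem_iff).mp hg'
  have hnormal : H.Normal := by
    constructor
    intro n hn g
    have hcomm : g * n * g⁻¹ * n⁻¹ ∈ H :=
      hGH (Subgroup.commutator_mem_commutator (Subgroup.mem_top g) (Subgroup.mem_top n))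
    have h3 := H.mul_mem hcomm hn
    simpa [mul_assoc] using h3
  refine ⟨hnormal, le_antisymm ?_ ?_⟩
  · intro g hg
    have hgH : g ∈ H := hGH hg
    have hginv : g⁻¹ ∈ H := H.inv_mem hgH
    have hmem : (⟨g⁻¹, hginv⟩ : ↥H) ∈ commutator ↥H := by
      by_contra hx
      have hx1 : Abelianization.of (⟨g⁻¹, hginv⟩ : ↥H) ≠ 1 := by
        intro h1
        exact hx ((QuotientGroup.eq_one_iff _).mp h1)
      haveI : Finite (Abelianization ↥H) := by
        unfold Abelianization
        infer_instance
      haveI : NeZero ((Monoid.exponent (Abelianization ↥H) : ℂ)) :=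
        ⟨Nat.cast_ne_zero.mpr Monoid.exponent_ne_zero_of_finite⟩
      obtain ⟨φ, hφ⟩ := CommGroup.exists_apply_ne_one_of_hasEnoughRootsOfUnity
        (Abelianization ↥H) ℂ hx1
      obtain ⟨hg', h1⟩ := key (φ.comp Abelianization.of) g hg
      apply hφ
      exact Units.ext (by rw [Units.val_one]; exact h1)
    refine Subgroup.mem_map.mpr ⟨(⟨g⁻¹, hginv⟩ : ↥H)⁻¹, (commutator ↥H).inv_mem hmem, by simp⟩
  · have hmap : Subgroup.map H.subtype (commutator ↥H)
        = ⁅Subgroup.map H.subtype ⊤, Subgroup.map H.subtype ⊤⁆ := by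
      rw [commutator_def, Subgroup.map_commutator]
    rw [hmap]
    exact Subgroup.commutator_mono le_top le_top


end
end

section
/- Let G be a finite group, H a subgroup, and β ∈ Irr(H) with β(1) > 1 such that β^G is irreducible of degree m(G). Then β(1) = m(H), i.e., β is a minimal non-linear irreducible character of H. -/
open scoped BigOperators
open CategoryTheory

noncomputable section

namespace Stmt8Aux

open CategoryTheory Module LinearMap

set_option linter.unusedSectionVars false
set_option maxHeartbeats 1600000

section SubRep

variable {G : Type} [Group G] [Fintype G]

def subρ {V : Type} [AddCommGroup V] [Module ℂ V] (ρ : Representation ℂ G V)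
    (p : Submodule ℂ V) (hp : ∀ g, ∀ x ∈ p, ρ g x ∈ p) : Representation ℂ G p where
  toFun g := (ρ g).restrict (fun x hx => hp g x hx)
  map_one' := by ext x; simp [LinearMap.restrict_apply]
  map_mul' g h := by ext x; simp [LinearMap.restrict_apply]

@[simp] lemma subρ_coe {V : Type} [AddCommGroup V] [Module ℂ V] (ρ : Representation ℂ G V)
    (p : Submodule ℂ V) (hp : ∀ g, ∀ x ∈ p, ρ g x ∈ p) (g : G) (x : p) :
    ((subρ ρ p hp g x : p) : V) = ρ g (x : V) := rfl

lemma exists_invariant_compl {V : Type} [AddCommGroup V] [Module ℂ V] [FiniteDimensional ℂ V]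
    (ρ : Representation ℂ G V) (p : Submodule ℂ V) (hp : ∀ g, ∀ x ∈ p, ρ g x ∈ p) :
    ∃ q : Submodule ℂ V, IsCompl p q ∧ ∀ g, ∀ x ∈ q, ρ g x ∈ q := by
  obtain ⟨π₀, hπ₀⟩ := p.subtype.exists_leftInverse_of_injective p.ker_subtype
  have hπ₀' : ∀ x : p, π₀ (x : V) = x := fun x => LinearMap.congr_fun hπ₀ x
  set π : V →ₗ[ℂ] p :=
    (Fintype.card G : ℂ)⁻¹ • ∑ g : G, (subρ ρ p hp g⁻¹) ∘ₗ (π₀ ∘ₗ (ρ g)) with hπ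
  have hcard : (Fintype.card G : ℂ) ≠ 0 := Nat.cast_ne_zero.mpr Fintype.card_ne_zero
  have hproj : ∀ x : p, π (x : V) = x := by
    intro x
    have h1 : ∀ g : G, ((subρ ρ p hp g⁻¹) ∘ₗ (π₀ ∘ₗ (ρ g))) (x : V) = x := by
      intro g
      have h2 : π₀ (ρ g (x : V)) = ⟨ρ g (x : V), hp g x x.2⟩ := hπ₀' ⟨ρ g (x : V), hp g x x.2⟩
      rw [LinearMap.comp_apply, LinearMap.comp_apply, h2]
      ext
      rw [subρ_coe]
      show ρ g⁻¹ (ρ g (x : V)) = x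
      rw [← Module.End.mul_apply, ← map_mul]
      simp
    rw [hπ, LinearMap.smul_apply, LinearMap.sum_apply]
    rw [Finset.sum_congr rfl (fun g _ => h1 g), Finset.sum_const, Finset.card_univ]
    rw [← Nat.cast_smul_eq_nsmul ℂ, smul_smul, inv_mul_cancel₀ hcard, one_smul]
  have hequiv : ∀ (h : G) (v : V), π (ρ h v) = subρ ρ p hp h (π v) := by
    intro h v
    rw [hπ]
    simp only [LinearMap.smul_apply, LinearMap.sum_apply, LinearMap.comp_apply, map_smul, map_sum]
    congr 1
    refine Fintype.sum_bijective (· * h) (Group.mulRight_bijective h) _ _ fun g => ?_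
    ext
    simp only [subρ_coe, map_sum, map_smul]
    have e1 : ρ g (ρ h v) = ρ (g * h) v := by rw [← Module.End.mul_apply, ← map_mul]
    have e2 : ρ h (ρ (g * h)⁻¹ ((π₀ (ρ (g * h) v)) : V)) = ρ g⁻¹ ((π₀ (ρ (g * h) v)) : V) := by
      rw [← Module.End.mul_apply (ρ h), ← map_mul, mul_inv_rev, mul_inv_cancel_left]
    rw [e1, e2]
  refine ⟨LinearMap.ker π, LinearMap.isCompl_of_proj hproj, ?_⟩
  intro g x hx
  rw [LinearMap.mem_ker] at hx ⊢
  rw [hequiv g x, hx, map_zero]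

lemma comm_apply {Y V : FDRep ℂ G} (f : Y ⟶ V) (g : G) (y : Y.V) :
    f.hom (Y.ρ g y) = V.ρ g (f.hom y) := by
  have := f.comm g
  exact congrFun (congrArg (fun (l : Y.V ⟶ V.V) => (l : Y.V → V.V)) this) y

lemma simple_of_no_invariant (V : FDRep ℂ G) (h0 : Nontrivial V)
    (hs : ∀ p : Submodule ℂ V, (∀ g, ∀ x ∈ p, V.ρ g x ∈ p) → p = ⊥ ∨ p = ⊤) : Simple V := by
  constructor
  intro Y f hf
  constructor
  · intro hiso hzero
    obtain ⟨a, b, hab⟩ := h0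
    have h1 : inv f ≫ f = 𝟙 V := IsIso.inv_hom_id f
    have h2 : inv f ≫ f = inv f ≫ (0 : Y ⟶ V) := congrArg (inv f ≫ ·) hzero
    rw [Limits.comp_zero] at h2
    have h3 : (𝟙 V : V ⟶ V) = 0 := h1.symm.trans h2
    have hall : ∀ v : V, v = 0 := by
      intro v
      have h4 := congrFun (congrArg (fun (l : V.V ⟶ V.V) => (l : V.V → V.V))
        (congrArg Action.Hom.hom h3)) v
      exact h4
    exact hab ((hall a).trans (hall b).symm)
  · intro hne
    have hrng : ∀ g, ∀ x ∈ LinearMap.range f.hom.hom.hom, V.ρ g x ∈ LinearMap.range f.hom.hom.hom := by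
      rintro g x ⟨y, rfl⟩
      exact ⟨Y.ρ g y, comm_apply f g y⟩
    have hrngT : LinearMap.range f.hom.hom.hom = ⊤ := by
      rcases hs _ hrng with h | h
      · exact absurd (Action.hom_ext f 0 (FGModuleCat.hom_ext (LinearMap.range_eq_bot.mp h))) hne
      · exact h
    have hker : LinearMap.ker f.hom.hom.hom = ⊥ := by
      by_contra hK
      have hKinv : ∀ g, ∀ x ∈ LinearMap.ker f.hom.hom.hom, Y.ρ g x ∈ LinearMap.ker f.hom.hom.hom := by
        intro g x hx
        rw [LinearMap.mem_ker] at hx ⊢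
        exact (comm_apply f g x).trans (by rw [show f.hom x = 0 from hx, map_zero])
      set W : FDRep ℂ G := FDRep.of (subρ Y.ρ (LinearMap.ker f.hom.hom.hom) hKinv) with hW
      let ι : W ⟶ Y :=
        { hom := FGModuleCat.ofHom (LinearMap.ker f.hom.hom.hom).subtype
          comm := fun g => rfl }
      have hcomp : ι ≫ f = (0 : W ⟶ Y) ≫ f := by
        rw [Limits.zero_comp]
        apply Action.hom_ext
        ext x
        exact x.2
      have hι : ι = 0 := (cancel_mono f).mp hcomp
      obtain ⟨x, hxK, hx0⟩ := (Submodule.ne_bot_iff _).mp hK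
      have hx : ι.hom ⟨x, hxK⟩ = x := rfl
      rw [hι] at hx
      exact hx0 hx.symm
    have hinj : Function.Injective f.hom := LinearMap.ker_eq_bot.mp hker
    have hsurj : Function.Surjective f.hom := LinearMap.range_eq_top.mp hrngT
    let e : Y.V ≃ₗ[ℂ] V.V := LinearEquiv.ofBijective f.hom.hom.hom ⟨hinj, hsurj⟩
    let ginv : V ⟶ Y :=
      { hom := FGModuleCat.ofHom e.symm.toLinearMap
        comm := fun g => by
          ext v
          apply hinj
          show f.hom (e.symm (V.ρ g v)) = f.hom (Y.ρ g (e.symm v))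
          rw [comm_apply f g (e.symm v)]
          have h1 : ∀ w, f.hom (e.symm w) = w := fun w => e.apply_symm_apply w
          rw [h1, h1] }
    refine ⟨⟨ginv, ?_, ?_⟩⟩
    · apply Action.hom_ext
      ext y
      exact e.symm_apply_apply y
    · apply Action.hom_ext
      ext v
      exact e.apply_symm_apply v

lemma char_add (V : FDRep ℂ G) {p q : Submodule ℂ V} (h : IsCompl p q)
    (hp : ∀ g, ∀ x ∈ p, V.ρ g x ∈ p) (hq : ∀ g, ∀ x ∈ q, V.ρ g x ∈ q) (g : G) :
    V.character g
      = (FDRep.of (subρ V.ρ p hp)).character g + (FDRep.of (subρ V.ρ q hq)).character g := by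
  have huniv : (Set.univ : Set Bool) = {true, false} := by ext b; cases b <;> simp
  have hint : DirectSum.IsInternal (fun b : Bool => bif b then p else q) := by
    rw [DirectSum.isInternal_submodule_iff_isCompl _ (by simp : (true : Bool) ≠ false) huniv]
    exact h
  have hf : ∀ b : Bool, Set.MapsTo (V.ρ g) ((bif b then p else q : Submodule ℂ V) : Set V)
      ((bif b then p else q : Submodule ℂ V) : Set V) := by
    intro b
    cases b
    · exact fun x hx => hq g x hx
    · exact fun x hx => hp g x hx
  have := LinearMap.trace_eq_sum_trace_restrict hint hf
  rw [Fintype.sum_bool] at this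
  exact this

lemma char_decomp (V : FDRep ℂ G) : ∃ s : Multiset (FDRep ℂ G),
    (∀ W ∈ s, Simple W) ∧ ∀ g, V.character g = (s.map (fun W => W.character g)).sum := by
  suffices H : ∀ (n : ℕ) (V : FDRep ℂ G), finrank ℂ V = n → ∃ s : Multiset (FDRep ℂ G),
      (∀ W ∈ s, Simple W) ∧ ∀ g, V.character g = (s.map (fun W => W.character g)).sum from
    H _ V rfl
  intro n
  induction n using Nat.strong_induction_on with
  | _ n ih =>
    intro V hn
    by_cases h0 : Nontrivial V
    · by_cases hsplit : ∃ p : Submodule ℂ V, (∀ g, ∀ x ∈ p, V.ρ g x ∈ p) ∧ p ≠ ⊥ ∧ p ≠ ⊤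
      · obtain ⟨p, hpinv, hpbot, hptop⟩ := hsplit
        obtain ⟨q, hcompl, hqinv⟩ := exists_invariant_compl V.ρ p hpinv
        have hqbot : q ≠ ⊥ := by
          intro hq
          apply hptop
          have := hcompl.codisjoint
          rw [codisjoint_iff] at this
          rw [hq, sup_bot_eq] at this
          exact this
        have hrank : finrank ℂ p + finrank ℂ q = n := by
          rw [← hn]; exact (Submodule.finrank_add_eq_of_isCompl hcompl)
        have hppos : 0 < finrank ℂ p := by
          rcases Nat.eq_zero_or_pos (finrank ℂ p) with h | h
          · exact absurd (Submodule.finrank_eq_zero.mp h) hpbot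
          · exact h
        have hqpos : 0 < finrank ℂ q := by
          rcases Nat.eq_zero_or_pos (finrank ℂ q) with h | h
          · exact absurd (Submodule.finrank_eq_zero.mp h) hqbot
          · exact h
        have hplt : finrank ℂ p < n := by omega
        have hqlt : finrank ℂ q < n := by omega
        obtain ⟨s₁, hs₁, hc₁⟩ := ih _ hplt (FDRep.of (subρ V.ρ p hpinv)) rfl
        obtain ⟨s₂, hs₂, hc₂⟩ := ih _ hqlt (FDRep.of (subρ V.ρ q hqinv)) rfl
        refine ⟨s₁ + s₂, ?_, ?_⟩
        · intro W hW
          rcases Multiset.mem_add.mp hW with h | h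
          · exact hs₁ W h
          · exact hs₂ W h
        · intro g
          rw [Multiset.map_add, Multiset.sum_add, ← hc₁ g, ← hc₂ g]
          exact char_add V hcompl hpinv hqinv g
      · push_neg at hsplit
        have hs : ∀ p : Submodule ℂ V, (∀ g, ∀ x ∈ p, V.ρ g x ∈ p) → p = ⊥ ∨ p = ⊤ := by
          intro p hpinv
          by_contra hcon
          push_neg at hcon
          exact hcon.2 (hsplit p hpinv hcon.1)
        have : Simple V := simple_of_no_invariant V h0 hs
        refine ⟨{V}, ?_, ?_⟩
        · intro W hW
          rw [Multiset.mem_singleton] at hW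
          subst hW; exact this
        · intro g; simp
    · have hss : Subsingleton V := not_nontrivial_iff_subsingleton.mp h0
      refine ⟨0, by simp, fun g => ?_⟩
      simp only [Multiset.map_zero, Multiset.sum_zero]
      have hρ : V.ρ g = 0 := Subsingleton.elim _ _
      show LinearMap.trace ℂ V (V.ρ g) = 0
      rw [hρ, map_zero]

lemma finrank_pos_of_simple (V : FDRep ℂ G) [Simple V] : 0 < finrank ℂ V := by
  by_contra h
  push_neg at h
  have h0 : finrank ℂ V = 0 := Nat.le_zero.mp h
  have hss : Subsingleton V := (Module.finrank_zero_iff (R := ℂ) (M := V)).mp h0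
  have : (𝟙 V : V ⟶ V) = 0 := by
    apply Action.hom_ext
    ext v
    exact hss.elim _ _
  exact id_nonzero V this

lemma simple_of_finrank_one (V : FDRep ℂ G) (h : finrank ℂ V = 1) : Simple V := by
  have h0 : Nontrivial V := by
    apply Module.nontrivial_of_finrank_pos (R := ℂ) (M := V)
    omega
  apply simple_of_no_invariant V h0
  intro p _
  rcases Nat.eq_zero_or_pos (finrank ℂ p) with hp | hp
  · exact Or.inl (Submodule.finrank_eq_zero.mp hp)
  · right
    apply Submodule.eq_top_of_finrank_eq
    have hle : finrank ℂ p ≤ finrank ℂ V := Submodule.finrank_le p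
    omega

end SubRep

section Inner

def cInner (G : Type) [Group G] [Fintype G] (φ ψ : G → ℂ) : ℂ :=
  (Fintype.card G : ℂ)⁻¹ * ∑ g : G, φ g * ψ g⁻¹

variable {G : Type} [Group G] [Fintype G]

open scoped Classical in
lemma cInner_orthonormal (V W : FDRep ℂ G) [Simple V] [Simple W] :
    cInner G V.character W.character = if Nonempty (V ≅ W) then 1 else 0 := by
  have h := FDRep.char_orthonormal (k := ℂ) (G := G) V W
  rw [cInner, ← Nat.card_eq_fintype_card]
  convert h using 2

lemma cInner_map_sum {α : Type*} (s : Multiset α) (F : α → G → ℂ) (ψ : G → ℂ) :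
    cInner G (fun g => (s.map (fun a => F a g)).sum) ψ
      = (s.map (fun a => cInner G (F a) ψ)).sum := by
  induction s using Multiset.induction with
  | empty => simp [cInner]
  | cons a t ihh =>
    simp only [Multiset.map_cons, Multiset.sum_cons]
    rw [← ihh]
    simp only [cInner, ← mul_add, ← Finset.sum_add_distrib, add_mul]

lemma exists_mult (V : FDRep ℂ G) (S : FDRep ℂ G) [Simple S] :
    ∃ m : ℕ, cInner G V.character S.character = m := by
  classical
  obtain ⟨s, hs, hc⟩ := char_decomp V
  have hchar : V.character = fun g => (s.map (fun W => W.character g)).sum :=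
    funext fun g => hc g
  refine ⟨(s.map (fun W => if Nonempty (W ≅ S) then 1 else 0)).sum, ?_⟩
  rw [hchar]
  refine (cInner_map_sum s (fun W => W.character) S.character).trans ?_
  rw [Nat.cast_multiset_sum, Multiset.map_map]
  apply congrArg Multiset.sum
  apply Multiset.map_congr rfl
  intro W hW
  haveI := hs W hW
  simp only [Function.comp_apply]
  rw [cInner_orthonormal]
  by_cases hiso : Nonempty (W ≅ S)
  · simp [hiso]
  · simp [hiso]

end Inner

section Regular

variable (G : Type) [Group G] [Fintype G]

def regρ : Representation ℂ G (G → ℂ) where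
  toFun g := LinearMap.funLeft ℂ ℂ (fun x => g⁻¹ * x)
  map_one' := by
    ext f x
    simp [LinearMap.funLeft]
  map_mul' g h := by
    ext f x
    simp [LinearMap.funLeft, mul_assoc]

def regRep : FDRep ℂ G := FDRep.of (regρ G)

open scoped Classical in
lemma regRep_char (g : G) :
    (regRep G).character g = if g = 1 then (Fintype.card G : ℂ) else 0 := by
  show LinearMap.trace ℂ (G → ℂ) (regρ G g) = _
  rw [LinearMap.trace_eq_matrix_trace ℂ (Pi.basisFun ℂ G), Matrix.trace]
  have hdiag : ∀ x : G, ((LinearMap.toMatrix (Pi.basisFun ℂ G) (Pi.basisFun ℂ G)) (regρ G g)) x x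
      = if g = 1 then (1 : ℂ) else 0 := by
    intro x
    rw [LinearMap.toMatrix_apply]
    simp only [Pi.basisFun_repr, Pi.basisFun_apply]
    have hstep : ((regρ G g) (Pi.single x 1 : G → ℂ)) x = (Pi.single x 1 : G → ℂ) (g⁻¹ * x) := rfl
    rw [hstep, Pi.single_apply]
    have hiff : (g⁻¹ * x = x) ↔ (g = 1) := by
      rw [mul_eq_right, inv_eq_one]
    by_cases hg : g = 1
    · rw [if_pos (hiff.mpr hg), if_pos hg]
    · rw [if_neg (fun hc => hg (hiff.mp hc)), if_neg hg]
  simp only [Matrix.diag_apply] at *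
  rw [Finset.sum_congr rfl (fun x _ => hdiag x), Finset.sum_const, Finset.card_univ]
  split <;> simp

end Regular

section Res

variable {G : Type} [Group G] [Fintype G]

def resRep (H : Subgroup G) (V : FDRep ℂ G) : FDRep ℂ ↥H :=
  FDRep.of (V.ρ.comp H.subtype)

lemma resRep_char (H : Subgroup G) (V : FDRep ℂ G) (h : ↥H) :
    (resRep H V).character h = V.character (h : G) := rfl

lemma resRep_finrank (H : Subgroup G) (V : FDRep ℂ G) :
    finrank ℂ (resRep H V) = finrank ℂ V := rfl

/-- The core counting argument: if `H ≤ G` has a simple representation of dimension `n > 1`,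
then `G` has a simple representation `W₀` with `1 < dim W₀ ≤ [G:H] * n`. -/
lemma core (H : Subgroup G) (Vψ : FDRep ℂ ↥H) [Simple Vψ] (hn : 1 < finrank ℂ Vψ) :
    ∃ W₀ : FDRep ℂ G, Simple W₀ ∧ 1 < finrank ℂ W₀ ∧
      finrank ℂ W₀ ≤ H.index * finrank ℂ Vψ := by
  classical
  set n := finrank ℂ Vψ with hn'
  obtain ⟨s, hsSimple, hsChar⟩ := char_decomp (regRep G)
  have hψ1 : Vψ.character 1 = (n : ℂ) := FDRep.char_one Vψ
  -- multiplicities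
  have hmult : ∀ W : FDRep ℂ G, ∃ m : ℕ,
      cInner ↥H (resRep H W).character Vψ.character = m := by
    intro W
    exact exists_mult (resRep H W) Vψ
  choose μ hμ using hmult
  have hcardH : (Fintype.card ↥H : ℂ) ≠ 0 := Nat.cast_ne_zero.mpr Fintype.card_ne_zero
  have hindex : H.index * Fintype.card ↥H = Fintype.card G := by
    have := Subgroup.index_mul_card H
    rwa [Nat.card_eq_fintype_card, Nat.card_eq_fintype_card] at this
  -- Identity A : ∑_{W ∈ s} μ W = H.index * n
  have hresR : (resRep H (regRep G)).character
      = fun h : ↥H => (s.map (fun W => (resRep H W).character h)).sum := by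
    funext h
    rw [resRep_char, hsChar (h : G)]
    exact congrArg Multiset.sum (Multiset.map_congr rfl (fun W _ => rfl))
  have hA0 : cInner ↥H (resRep H (regRep G)).character Vψ.character
      = (s.map (fun W => cInner ↥H (resRep H W).character Vψ.character)).sum := by
    rw [hresR]
    exact cInner_map_sum s (fun W => (resRep H W).character) Vψ.character
  have hA1 : cInner ↥H (resRep H (regRep G)).character Vψ.character
      = ((H.index * n : ℕ) : ℂ) := by
    rw [cInner]
    have hterm : ∀ h : ↥H, (resRep H (regRep G)).character h * Vψ.character h⁻¹
        = if h = 1 then (Fintype.card G : ℂ) * Vψ.character h⁻¹ else 0 := by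
      intro h
      rw [resRep_char, regRep_char]
      by_cases hh : h = 1
      · rw [if_pos hh, if_pos (by rw [hh]; simp)]
      · rw [if_neg hh, if_neg (by simpa [OneMemClass.coe_eq_one] using hh), zero_mul]
    rw [Finset.sum_congr rfl (fun h _ => hterm h), Finset.sum_ite_eq' Finset.univ (1 : ↥H)]
    rw [if_pos (Finset.mem_univ _)]
    have : ((1 : ↥H)⁻¹ : ↥H) = 1 := inv_one
    rw [this, hψ1]
    push_cast
    rw [← hindex]
    push_cast
    field_simp
  have hA : ((s.map μ).sum : ℂ) = ((H.index * n : ℕ) : ℂ) := by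
    rw [← hA1, hA0, Nat.cast_multiset_sum, Multiset.map_map]
    apply congrArg Multiset.sum
    apply Multiset.map_congr rfl
    intro W _
    exact (hμ W).symm
  have hAnat : (s.map μ).sum = H.index * n := by
    exact_mod_cast hA
  -- there is W₀ ∈ s with μ W₀ ≠ 0
  have hipos : H.index ≠ 0 := Subgroup.index_ne_zero_of_finite
  have hsumpos : (s.map μ).sum ≠ 0 := by
    rw [hAnat]
    positivity
  have hW₀ : ∃ W₀ ∈ s, μ W₀ ≠ 0 := by
    by_contra hcon
    push_neg at hcon
    apply hsumpos
    apply Multiset.sum_eq_zero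
    intro x hx
    obtain ⟨W, hW, rfl⟩ := Multiset.mem_map.mp hx
    exact hcon W hW
  obtain ⟨W₀, hW₀s, hW₀μ⟩ := hW₀
  haveI hW₀simple : Simple W₀ := hsSimple W₀ hW₀s
  refine ⟨W₀, hW₀simple, ?_, ?_⟩
  -- 1 < finrank W₀
  · by_contra hle
    push_neg at hle
    have hpos := finrank_pos_of_simple W₀
    have h1 : finrank ℂ W₀ = 1 := by omega
    have hr1 : finrank ℂ (resRep H W₀) = 1 := by rw [resRep_finrank]; exact h1
    haveI := simple_of_finrank_one (resRep H W₀) hr1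
    have horth := cInner_orthonormal (resRep H W₀) Vψ
    rw [hμ W₀] at horth
    by_cases hiso : Nonempty (resRep H W₀ ≅ Vψ)
    · rw [if_pos hiso] at horth
      obtain ⟨i⟩ := hiso
      have hchar := FDRep.char_iso i
      have := congrFun hchar 1
      rw [hψ1] at this
      have hfr : (resRep H W₀).character 1 = ((1 : ℕ) : ℂ) := by
        rw [FDRep.char_one, hr1]
      rw [hfr] at this
      have : (1 : ℕ) = n := by exact_mod_cast this
      omega
    · rw [if_neg hiso] at horth
      exact hW₀μ (by exact_mod_cast horth)
  -- finrank W₀ ≤ index * n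
  · -- Identity B : countP of isomorphic-to-W₀ equals finrank W₀
    set P : FDRep ℂ G → Prop := fun W => Nonempty (W ≅ W₀) with hP
    have hB0 : cInner G (regRep G).character W₀.character
        = (s.map (fun W => cInner G W.character W₀.character)).sum := by
      have : (regRep G).character = fun g => (s.map (fun W => W.character g)).sum :=
        funext fun g => hsChar g
      rw [this]
      exact cInner_map_sum s (fun W => W.character) W₀.character
    have hB1 : cInner G (regRep G).character W₀.character = ((finrank ℂ W₀ : ℕ) : ℂ) := by
      rw [cInner]
      have hterm : ∀ g : G, (regRep G).character g * W₀.character g⁻¹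
          = if g = 1 then (Fintype.card G : ℂ) * W₀.character g⁻¹ else 0 := by
        intro g
        rw [regRep_char]
        by_cases hg : g = 1
        · rw [if_pos hg, if_pos hg]
        · rw [if_neg hg, if_neg hg, zero_mul]
      rw [Finset.sum_congr rfl (fun g _ => hterm g), Finset.sum_ite_eq' Finset.univ (1 : G)]
      rw [if_pos (Finset.mem_univ _), inv_one, FDRep.char_one]
      have hcardG : (Fintype.card G : ℂ) ≠ 0 := Nat.cast_ne_zero.mpr Fintype.card_ne_zero
      field_simp
    have hB2 : cInner G (regRep G).character W₀.character
        = ((s.map (fun W => if P W then 1 else 0 : FDRep ℂ G → ℕ)).sum : ℂ) := by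
      rw [hB0, Nat.cast_multiset_sum, Multiset.map_map]
      apply congrArg Multiset.sum
      apply Multiset.map_congr rfl
      intro W hW
      haveI := hsSimple W hW
      rw [cInner_orthonormal]
      by_cases hiso : Nonempty (W ≅ W₀)
      · rw [if_pos hiso]
        simp [hP, hiso]
      · rw [if_neg hiso]
        simp [hP, hiso]
    have hB : (s.map (fun W => if P W then 1 else 0 : FDRep ℂ G → ℕ)).sum = finrank ℂ W₀ := by
      have := hB1.symm.trans hB2
      exact_mod_cast this.symm
    -- all isomorphic copies have the same multiplicity
    have hsame : ∀ W ∈ s, P W → μ W = μ W₀ := by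
      intro W _ hPW
      obtain ⟨i⟩ := hPW
      have hchar : W.character = W₀.character := FDRep.char_iso i
      have hres : (resRep H W).character = (resRep H W₀).character := by
        funext h
        rw [resRep_char, resRep_char, hchar]
      have h1 := hμ W
      rw [hres, hμ W₀] at h1
      exact_mod_cast h1.symm
    -- sum bound
    have hfilter : (s.filter P).map μ = (s.filter P).map (fun _ => μ W₀) := by
      apply Multiset.map_congr rfl
      intro W hW
      exact hsame W (Multiset.mem_filter.mp hW).1 (Multiset.mem_filter.mp hW).2
    have hcount : Multiset.card (s.filter P) = finrank ℂ W₀ := by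
      rw [← hB]
      have hsplit : s = s.filter P + s.filter (fun W => ¬ P W) :=
        (Multiset.filter_add_not P s).symm
      conv_rhs => rw [hsplit]
      rw [Multiset.map_add, Multiset.sum_add]
      have h1 : (s.filter P).map (fun W => if P W then 1 else 0 : FDRep ℂ G → ℕ)
          = (s.filter P).map (fun _ => 1) :=
        Multiset.map_congr rfl (fun W hW => by rw [if_pos (Multiset.mem_filter.mp hW).2])
      have h2 : (s.filter (fun W => ¬ P W)).map (fun W => if P W then 1 else 0 : FDRep ℂ G → ℕ)
          = (s.filter (fun W => ¬ P W)).map (fun _ => 0) :=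
        Multiset.map_congr rfl (fun W hW => by rw [if_neg (Multiset.mem_filter.mp hW).2])
      rw [h1, h2, Multiset.map_const', Multiset.map_const', Multiset.sum_replicate,
        Multiset.sum_replicate]
      simp
    have hbound : finrank ℂ W₀ * μ W₀ ≤ (s.map μ).sum := by
      have hsplit : s = s.filter P + s.filter (fun W => ¬ P W) := (Multiset.filter_add_not P s).symm
      calc finrank ℂ W₀ * μ W₀
          = Multiset.card (s.filter P) * μ W₀ := by rw [hcount]
        _ = ((s.filter P).map (fun _ => μ W₀)).sum := by
            rw [Multiset.map_const', Multiset.sum_replicate, smul_eq_mul]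
        _ = ((s.filter P).map μ).sum := by rw [hfilter]
        _ ≤ ((s.filter P).map μ).sum + ((s.filter (fun W => ¬ P W)).map μ).sum :=
            Nat.le_add_right _ _
        _ = (s.map μ).sum := by
            conv_rhs => rw [hsplit]
            rw [Multiset.map_add, Multiset.sum_add]
    have hμpos : 1 ≤ μ W₀ := Nat.one_le_iff_ne_zero.mpr hW₀μ
    calc finrank ℂ W₀ ≤ finrank ℂ W₀ * μ W₀ := Nat.le_mul_of_pos_right _ hμpos
      _ ≤ (s.map μ).sum := hbound
      _ = H.index * n := hAnat

end Res

end Stmt8Aux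

/-- If `β ∈ Irr(H)` is non-linear and `β^G` is irreducible of degree `m(G)`, then
`β(1) = m(H)`, i.e. `β` is a minimal character of `H`. -/
theorem stmt8 (G : Type) [Group G] [Fintype G] (H : Subgroup G) (β : ↥H → ℂ)
    (hβ : IsIrrChar ↥H β) (d : ℕ) (hd : β 1 = (d : ℂ)) (hd1 : 1 < d)
    (hirr : IsIrrChar G (indChar H β)) (hdeg : indChar H β 1 = (minDeg G : ℂ)) :
    d = minDeg ↥H := by
  classical
  obtain ⟨Vβ, hVβ, hβchar⟩ := hβ
  -- the value of the induced character at 1 is [G:H] * d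
  have hcardH : (Nat.card ↥H : ℂ) ≠ 0 := by
    rw [Nat.card_eq_fintype_card]
    exact Nat.cast_ne_zero.mpr Fintype.card_ne_zero
  have hindex : H.index * Fintype.card ↥H = Fintype.card G := by
    have := Subgroup.index_mul_card H
    rwa [Nat.card_eq_fintype_card, Nat.card_eq_fintype_card] at this
  have hval : indChar H β 1 = ((H.index * d : ℕ) : ℂ) := by
    rw [indChar]
    have hterm : ∀ x : G,
        (if h : x⁻¹ * 1 * x ∈ H then β ⟨x⁻¹ * 1 * x, h⟩ else 0) = (d : ℂ) := by
      intro x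
      have hx : x⁻¹ * 1 * x = 1 := by group
      simp only [hx]
      rw [dif_pos H.one_mem]
      have h1 : (⟨1, H.one_mem⟩ : ↥H) = 1 := rfl
      rw [h1, hd]
    rw [Finset.sum_congr rfl (fun x _ => hterm x), Finset.sum_const, Finset.card_univ,
      nsmul_eq_mul]
    rw [Nat.card_eq_fintype_card]
    rw [← hindex]
    push_cast
    field_simp
  have hmindeg : minDeg G = H.index * d := by
    have h := hdeg
    rw [hval] at h
    exact_mod_cast h.symm
  -- upper bound : minDeg H ≤ d
  have hmem : d ∈ {n : ℕ | 1 < n ∧ ∃ χ : ↥H → ℂ, IsIrrChar ↥H χ ∧ χ 1 = (n : ℂ)} :=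
    ⟨hd1, β, ⟨Vβ, hVβ, hβchar⟩, hd⟩
  have hub : minDeg ↥H ≤ d := Nat.sInf_le hmem
  -- lower bound : d ≤ minDeg H
  have hmem' : minDeg ↥H ∈ {n : ℕ | 1 < n ∧ ∃ χ : ↥H → ℂ, IsIrrChar ↥H χ ∧ χ 1 = (n : ℂ)} :=
    Nat.sInf_mem ⟨d, hmem⟩
  obtain ⟨hm1, χ, ⟨Vψ, hVψ, rfl⟩, hχ1⟩ := hmem'
  haveI := hVψ
  have hfin : Module.finrank ℂ Vψ = minDeg ↥H := by
    have := FDRep.char_one Vψ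
    rw [this] at hχ1
    exact_mod_cast hχ1
  obtain ⟨W₀, hW₀simple, hW₀gt, hW₀le⟩ :=
    Stmt8Aux.core H Vψ (by rw [hfin]; exact hm1)
  have hG : minDeg G ≤ Module.finrank ℂ W₀ :=
    Nat.sInf_le ⟨hW₀gt, W₀.character, ⟨W₀, hW₀simple, rfl⟩, FDRep.char_one W₀⟩
  have hchain : H.index * d ≤ H.index * minDeg ↥H := by
    calc H.index * d = minDeg G := hmindeg.symm
      _ ≤ Module.finrank ℂ W₀ := hG
      _ ≤ H.index * Module.finrank ℂ Vψ := hW₀le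
      _ = H.index * minDeg ↥H := by rw [hfin]
  have hipos : 0 < H.index := Nat.pos_of_ne_zero Subgroup.index_ne_zero_of_finite
  have hlb : d ≤ minDeg ↥H := Nat.le_of_mul_le_mul_left hchain hipos
  exact le_antisymm hlb hub

end
end

section
/- Let G be a finite group and α a non-linear irreducible character of G such that α·conj(α) (the product of α with its complex conjugate) is a sum of linear characters. Then G' ≤ Z(α) := {g ∈ G : |α(g)| = α(1)}, and G/Ker(α) is nilpotent of class at most 2. -/
open scoped BigOperators
open CategoryTheory

noncomputable section

section Aux

open Polynomial

private lemma re_msum (s : Multiset ℂ) : s.sum.re = (s.map Complex.re).sum := by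
  induction s using Multiset.induction with
  | empty => simp
  | cons a t ih => simp [ih]

private lemma aux_all_eq (T : Multiset ℂ) (h1 : ∀ z ∈ T, ‖z‖ = 1)
    (hs : ‖T.sum‖ = T.card) (hT : T ≠ 0) :
    ∃ u : ℂ, ‖u‖ = 1 ∧ ∀ z ∈ T, z = u := by
  have hcpos : 0 < (T.card : ℝ) := by
    have := Multiset.card_pos.mpr hT
    exact_mod_cast this
  have hSne : T.sum ≠ 0 := by
    intro h
    rw [h] at hs
    simp at hs
    rw [← hs] at hcpos
    simp at hcpos
  set u : ℂ := T.sum / (T.card : ℂ) with hu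
  have hcne : ((T.card : ℕ) : ℂ) ≠ 0 := by
    exact_mod_cast hcpos.ne'
  have habsu : ‖u‖ = 1 := by
    rw [hu, norm_div, hs]
    simp only [Complex.norm_natCast]
    field_simp
  refine ⟨u, habsu, ?_⟩
  have hre_le : ∀ z ∈ T, ((z * (starRingEnd ℂ) u).re : ℝ) ≤ 1 := by
    intro z hz
    calc (z * (starRingEnd ℂ) u).re ≤ ‖z * (starRingEnd ℂ) u‖ :=
          Complex.re_le_norm _
      _ = 1 := by rw [norm_mul, h1 z hz, Complex.norm_conj, habsu, one_mul]
  have hsum_re : (T.map (fun z => (z * (starRingEnd ℂ) u).re)).sum = T.card := by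
    have h2 : (T.map (fun z => z * (starRingEnd ℂ) u)).sum = T.sum * (starRingEnd ℂ) u := by
      simpa using Multiset.sum_map_mul_right (s := T) (f := id) (a := (starRingEnd ℂ) u)
    have h3 : (T.map (fun z => (z * (starRingEnd ℂ) u).re)).sum
        = ((T.map (fun z => z * (starRingEnd ℂ) u)).sum).re := by
      rw [re_msum, Multiset.map_map]
      rfl
    rw [h3, h2]
    have hmc : T.sum * (starRingEnd ℂ) T.sum = (((T.card : ℝ) : ℂ))^2 := by
      rw [Complex.mul_conj, Complex.normSq_eq_norm_sq, hs]
      push_cast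
      ring
    rw [hu, map_div₀, map_natCast, mul_div_assoc', hmc]
    push_cast
    rw [sq, mul_div_assoc]
    rw [div_self hcne, mul_one]
    simp
  have hall : ∀ z ∈ T, (z * (starRingEnd ℂ) u).re = 1 := by
    by_contra hne
    push_neg at hne
    obtain ⟨z, hz, hzne⟩ := hne
    have hzlt : (z * (starRingEnd ℂ) u).re < 1 := lt_of_le_of_ne (hre_le z hz) hzne
    obtain ⟨T', hT'⟩ := Multiset.exists_cons_of_mem (Multiset.mem_map_of_mem
      (fun z => (z * (starRingEnd ℂ) u).re) hz)
    have hT'le : T'.sum ≤ (Multiset.card T' : ℝ) := by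
      have hle : ∀ x ∈ T', x ≤ (1 : ℝ) := by
        intro x hx
        have hxm : x ∈ T.map (fun z => (z * (starRingEnd ℂ) u).re) := by
          rw [hT']; exact Multiset.mem_cons_of_mem hx
        obtain ⟨w, hw, rfl⟩ := Multiset.mem_map.mp hxm
        exact hre_le w hw
      have := Multiset.sum_le_card_nsmul T' 1 hle
      simpa using this
    have hcard : (Multiset.card T : ℝ) = 1 + Multiset.card T' := by
      have : Multiset.card (T.map (fun z => (z * (starRingEnd ℂ) u).re))
          = Multiset.card T' + 1 := by rw [hT']; simp
      rw [Multiset.card_map] at this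
      rw [this]; push_cast; ring
    rw [hT', Multiset.sum_cons] at hsum_re
    rw [hcard] at hsum_re
    linarith
  intro z hz
  have h1' : ‖z * (starRingEnd ℂ) u‖ = 1 := by
    rw [norm_mul, h1 z hz, Complex.norm_conj, habsu, one_mul]
  have him : (z * (starRingEnd ℂ) u).im = 0 := by
    have hsq := Complex.sq_norm (z * (starRingEnd ℂ) u)
    rw [h1'] at hsq
    have hre := hall z hz
    rw [Complex.normSq_apply, hre] at hsq
    nlinarith [sq_nonneg (z * (starRingEnd ℂ) u).im]
  have hzu : z * (starRingEnd ℂ) u = 1 := by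
    apply Complex.ext
    · exact hall z hz
    · simpa using him
  have husq : (starRingEnd ℂ) u * u = 1 := by
    rw [mul_comm, Complex.mul_conj, Complex.normSq_eq_norm_sq, habsu]
    norm_num
  calc z = z * ((starRingEnd ℂ) u * u) := by rw [husq, mul_one]
    _ = (z * (starRingEnd ℂ) u) * u := by ring
    _ = u := by rw [hzu, one_mul]

private lemma root_pow_eq_one {n m : ℕ} (M : Matrix (Fin n) (Fin n) ℂ)
    (hMm : M ^ m = 1) {μ : ℂ} (hμ : μ ∈ M.charpoly.roots) : μ ^ m = 1 := by
  have hroot : M.charpoly.IsRoot μ :=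
    (Polynomial.mem_roots (Matrix.charpoly_monic M).ne_zero).mp hμ
  have hdet : (μ • (1 : Matrix (Fin n) (Fin n) ℂ) - M).det = 0 := by
    have heval : M.charpoly.eval μ = (μ • (1 : Matrix (Fin n) (Fin n) ℂ) - M).det := by
      rw [Matrix.charpoly]
      rw [show (Matrix.charmatrix M).det.eval μ
          = (Polynomial.evalRingHom μ) (Matrix.charmatrix M).det from rfl]
      rw [RingHom.map_det]
      congr 1
      ext i j
      by_cases h : i = j
      · subst h
        simp [Matrix.charmatrix_apply_eq, Matrix.one_apply]
      · simp [Matrix.charmatrix_apply_ne _ _ _ h, Matrix.one_apply_ne h, Matrix.sub_apply,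
          Matrix.smul_apply, h]
    rw [← heval]
    exact hroot
  obtain ⟨v, hv0, hv⟩ := (Matrix.exists_mulVec_eq_zero_iff).mpr hdet
  have hMv : M.mulVec v = μ • v := by
    have := hv
    rw [Matrix.sub_mulVec, sub_eq_zero] at this
    rw [← this, Matrix.smul_mulVec, Matrix.one_mulVec]
  have hpow : ∀ k : ℕ, (M ^ k).mulVec v = μ ^ k • v := by
    intro k
    induction k with
    | zero => simp [Matrix.one_mulVec]
    | succ k ih =>
      rw [pow_succ, ← Matrix.mulVec_mulVec, hMv, Matrix.mulVec_smul, ih, smul_smul, pow_succ]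
      ring_nf
  have hvm := hpow m
  rw [hMm, Matrix.one_mulVec] at hvm
  have h0 : (μ ^ m - 1) • v = 0 := by
    rw [sub_smul, one_smul, ← hvm, sub_self]
  rcases smul_eq_zero.mp h0 with h | h
  · exact sub_eq_zero.mp h
  · exact absurd h hv0

private lemma matrix_scalar {n m : ℕ} (hn : 0 < n) (hm : 0 < m)
    (M : Matrix (Fin n) (Fin n) ℂ)
    (hMm : M ^ m = 1) (htr : ‖M.trace‖ = n) :
    ∃ c : ℂ, M = c • 1 := by
  have hsplits : M.charpoly.Splits := IsAlgClosed.splits M.charpoly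
  have hdeg : M.charpoly.natDegree = n := by
    rw [Matrix.charpoly_natDegree_eq_dim]
    simp
  have hcard : Multiset.card M.charpoly.roots = n := by
    rw [(Polynomial.splits_iff_card_roots).mp hsplits, hdeg]
  have habs1 : ∀ z ∈ M.charpoly.roots, ‖z‖ = 1 := by
    intro z hz
    have hzm : z ^ m = 1 := root_pow_eq_one M hMm hz
    have hz1 : ‖z‖ ^ m = 1 := by
      rw [← norm_pow, hzm, norm_one]
    have hnn : 0 ≤ ‖z‖ := norm_nonneg _
    rcases lt_trichotomy (‖z‖) 1 with h | h | h
    · have := pow_lt_one₀ hnn h hm.ne'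
      linarith
    · exact h
    · have := one_lt_pow₀ h hm.ne'
      linarith
  have hT : M.charpoly.roots ≠ 0 := by
    intro h
    rw [h] at hcard
    simp at hcard
    omega
  have habs_sum : ‖M.charpoly.roots.sum‖ = Multiset.card M.charpoly.roots := by
    rw [hcard, ← Matrix.trace_eq_sum_roots_charpoly, htr]
  obtain ⟨u, habsu, hall⟩ := aux_all_eq M.charpoly.roots habs1 habs_sum hT
  have hrep : M.charpoly.roots = Multiset.replicate n u :=
    Multiset.eq_replicate.mpr ⟨hcard, hall⟩
  have hum : u ^ m = 1 := by
    obtain ⟨z, hz⟩ := Multiset.exists_mem_of_ne_zero hT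
    have := hall z hz
    subst this
    exact root_pow_eq_one M hMm hz
  have hcp : M.charpoly = (X - C u) ^ n := by
    have := hsplits.eq_prod_roots_of_monic (Matrix.charpoly_monic M)
    rw [this, hrep, Multiset.map_replicate, Multiset.prod_replicate]
  have hmindvd : minpoly ℂ M ∣ (X - C u) ^ n := by
    rw [← hcp]
    exact Matrix.minpoly_dvd_charpoly M
  obtain ⟨k, hkn, hassoc⟩ := (dvd_prime_pow (Polynomial.prime_X_sub_C u) n).mp hmindvd
  have hmineq : minpoly ℂ M = (X - C u) ^ k := by
    apply Polynomial.eq_of_monic_of_associated (minpoly.monic (Matrix.isIntegral M)) _ hassoc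
    exact (monic_X_sub_C u).pow k
  have hdvd2 : minpoly ℂ M ∣ X ^ m - 1 := by
    apply minpoly.dvd
    rw [map_sub, map_pow, aeval_X, map_one, hMm, sub_self]
  have hsqfree : Squarefree ((X : ℂ[X]) ^ m - 1) := by
    have h11 : ((X : ℂ[X]) ^ m - 1) = X ^ m - C 1 := by rw [map_one]
    rw [h11]
    exact (Polynomial.separable_X_pow_sub_C (1 : ℂ)
      (by exact_mod_cast Nat.cast_ne_zero.mpr hm.ne') one_ne_zero).squarefree
  match k, hmineq with
  | 0, hmineq =>
    exfalso
    rw [pow_zero] at hmineq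
    have := minpoly.aeval ℂ M
    rw [hmineq, map_one] at this
    have h00 : (1 : Matrix (Fin n) (Fin n) ℂ) ⟨0, hn⟩ ⟨0, hn⟩ = 0 := by rw [this]; rfl
    rw [Matrix.one_apply_eq] at h00
    exact one_ne_zero h00
  | 1, hmineq =>
    rw [pow_one] at hmineq
    have := minpoly.aeval ℂ M
    rw [hmineq, map_sub, aeval_X, aeval_C, Algebra.algebraMap_eq_smul_one, sub_eq_zero] at this
    exact ⟨u, this⟩
  | (k+2), hmineq =>
    exfalso
    have hdd : (X - C u) * (X - C u) ∣ (X : ℂ[X]) ^ m - 1 := by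
      have hmin2 : (X - C u) * (X - C u) ∣ minpoly ℂ M := by
        rw [hmineq, ← pow_two]
        exact pow_dvd_pow _ (by omega)
      exact hmin2.trans hdvd2
    exact Polynomial.not_isUnit_X_sub_C u (hsqfree _ hdd)

private lemma end_scalar {W : Type} [AddCommGroup W] [Module ℂ W] [FiniteDimensional ℂ W]
    (f : W →ₗ[ℂ] W) {m : ℕ} (hm : 0 < m) (hf : f ^ m = 1)
    (htr : ‖LinearMap.trace ℂ W f‖ = Module.finrank ℂ W) :
    ∃ c : ℂ, f = c • (1 : W →ₗ[ℂ] W) := by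
  rcases Nat.eq_zero_or_pos (Module.finrank ℂ W) with h0 | hpos
  · have : Subsingleton W := Module.finrank_zero_iff.mp h0
    exact ⟨0, by ext w; exact Subsingleton.elim _ _⟩
  · set b := Module.finBasis ℂ W
    set E := LinearMap.toMatrixAlgEquiv b with hE
    have hEf : E f = LinearMap.toMatrix b b f := rfl
    have hMm : (E f) ^ m = 1 := by rw [← map_pow, hf, map_one]
    have htr' : ‖(E f).trace‖ = Module.finrank ℂ W := by
      rw [hEf, ← LinearMap.trace_eq_matrix_trace ℂ b f]
      exact htr
    obtain ⟨c, hc⟩ := matrix_scalar hpos hm (E f) hMm htr'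
    refine ⟨c, ?_⟩
    apply E.injective
    rw [hc, map_smul, map_one]

/-- A character of degree one is multiplicative. -/
private lemma linear_char_mul {G : Type} [Group G] (W : FDRep ℂ G)
    (h1 : Module.finrank ℂ W = 1) (x y : G) :
    W.character (x * y) = W.character x * W.character y := by
  classical
  set b : Module.Basis (Fin 1) ℂ W := Module.finBasisOfFinrankEq ℂ W h1 with hb
  have key : ∀ f : W →ₗ[ℂ] W, LinearMap.trace ℂ W f = LinearMap.toMatrix b b f 0 0 := by
    intro f
    rw [LinearMap.trace_eq_matrix_trace ℂ b f, Matrix.trace]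
    simp [Matrix.diag]
  show LinearMap.trace ℂ W (W.ρ (x * y)) = LinearMap.trace ℂ W (W.ρ x) *
    LinearMap.trace ℂ W (W.ρ y)
  rw [key, key, key, map_mul]
  rw [LinearMap.toMatrix_mul b]
  rw [Matrix.mul_apply]
  simp

/-- A linear character is trivial on the commutator subgroup. -/
private lemma linear_char_commutator {G : Type} [Group G] (W : FDRep ℂ G)
    (h1 : W.character 1 = 1) :
    ∀ g ∈ commutator G, W.character g = 1 := by
  have hfr : Module.finrank ℂ W = 1 := by
    have := FDRep.char_one W
    rw [h1] at this
    exact_mod_cast this.symm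
  have hmul := linear_char_mul W hfr
  let L : Subgroup G :=
    { carrier := {x | W.character x = 1}
      one_mem' := h1
      mul_mem' := by
        intro a b ha hb
        simp only [Set.mem_setOf_eq] at *
        rw [hmul, ha, hb, one_mul]
      inv_mem' := by
        intro a ha
        simp only [Set.mem_setOf_eq] at *
        have : W.character a * W.character a⁻¹ = 1 := by
          rw [← hmul, mul_inv_cancel, h1]
        rwa [ha, one_mul] at this }
  have hle : commutator G ≤ L := by
    rw [commutator]
    rw [Subgroup.commutator_le]
    intro x _ y _
    have hx : W.character x * W.character x⁻¹ = 1 := by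
      rw [← hmul, mul_inv_cancel, h1]
    have hy : W.character y * W.character y⁻¹ = 1 := by
      rw [← hmul, mul_inv_cancel, h1]
    show W.character (x * y * x⁻¹ * y⁻¹) = 1
    rw [hmul, hmul, hmul]
    calc W.character x * W.character y * W.character x⁻¹ * W.character y⁻¹
        = (W.character x * W.character x⁻¹) * (W.character y * W.character y⁻¹) := by ring
      _ = 1 := by rw [hx, hy, one_mul]
  intro g hg
  exact hle hg

private lemma multiset_fun_sum_apply {G : Type} (s : Multiset (G → ℂ)) (g : G) :
    s.sum g = (s.map (fun f => f g)).sum := by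
  induction s using Multiset.induction with
  | empty => simp
  | cons a t ih => simp [Multiset.sum_cons, ih]

end Aux

/-- If `α` is a non-linear irreducible character of `G` (afforded by `V`) such that
`α ⬝ conj α` is a sum of linear characters, then `G' ≤ Z(α)` and `G/Ker α` is nilpotent
of class at most `2`. -/
theorem stmt10 (G : Type) [Group G] [Fintype G]
    (V : FDRep ℂ G) (hV : CategoryTheory.Simple V) (hnl : V.character 1 ≠ 1)
    (hsum : IsSumOfLinear G (fun g => V.character g * (starRingEnd ℂ) (V.character g))) :
    (↑(commutator G) : Set G) ⊆
        {g : G | ‖V.character g‖ = ‖V.character 1‖} ∧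
      (⊤ : Subgroup (G ⧸ repKer V)).lowerCentralSeries 2 = ⊥ := by
  obtain ⟨s, hs, hval⟩ := hsum
  -- part 1
  have part1 : ∀ g ∈ commutator G,
      ‖V.character g‖ = ‖V.character 1‖ := by
    intro g hg
    have happ : ∀ x : G, V.character x * (starRingEnd ℂ) (V.character x)
        = (s.map (fun β => β x)).sum := by
      intro x
      have := congrFun hval x
      rw [this, multiset_fun_sum_apply]
    have hlin : ∀ β ∈ s, ∀ x ∈ commutator G, β x = 1 := by
      intro β hβ
      obtain ⟨⟨W, rfl⟩, h1⟩ := hs β hβ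
      exact linear_char_commutator W h1
    have hg1 : V.character g * (starRingEnd ℂ) (V.character g) = (Multiset.card s : ℂ) := by
      rw [happ g]
      have : s.map (fun β => β g) = Multiset.replicate (Multiset.card s) 1 := by
        apply Multiset.eq_replicate.mpr
        constructor
        · simp
        · intro b hb
          obtain ⟨β, hβ, rfl⟩ := Multiset.mem_map.mp hb
          exact hlin β hβ g hg
      rw [this, Multiset.sum_replicate]
      simp
    have h11 : V.character 1 * (starRingEnd ℂ) (V.character 1) = (Multiset.card s : ℂ) := by
      rw [happ 1]
      have : s.map (fun β => β 1) = Multiset.replicate (Multiset.card s) 1 := by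
        apply Multiset.eq_replicate.mpr
        constructor
        · simp
        · intro b hb
          obtain ⟨β, hβ, rfl⟩ := Multiset.mem_map.mp hb
          exact (hs β hβ).2
      rw [this, Multiset.sum_replicate]
      simp
    have hns : Complex.normSq (V.character g) = Complex.normSq (V.character 1) := by
      have e1 := hg1
      have e2 := h11
      rw [Complex.mul_conj] at e1 e2
      have : (Complex.normSq (V.character g) : ℂ) = (Complex.normSq (V.character 1) : ℂ) := by
        rw [e1, e2]
      exact_mod_cast this
    rw [Complex.norm_def, Complex.norm_def, hns]
  refine ⟨fun g hg => part1 g hg, ?_⟩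
  -- part 2 : elements of the commutator subgroup act as scalars
  have hscal : ∀ a ∈ commutator G, ∀ b : G, V.ρ (a * b) = V.ρ (b * a) := by
    intro a ha b
    rcases Nat.eq_zero_or_pos (Module.finrank ℂ V) with h0 | hpos
    · have : Subsingleton V := Module.finrank_zero_iff.mp h0
      have : Subsingleton (V →ₗ[ℂ] V) := by infer_instance
      exact Subsingleton.elim _ _
    · have hm : 0 < orderOf a := orderOf_pos a
      have hfm : (V.ρ a) ^ (orderOf a) = 1 := by
        rw [← map_pow, pow_orderOf_eq_one, map_one]
      have htr : ‖LinearMap.trace ℂ V (V.ρ a)‖ = Module.finrank ℂ V := by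
        have h1 := part1 a ha
        have h2 : ‖V.character 1‖ = Module.finrank ℂ V := by
          rw [FDRep.char_one]
          exact Complex.norm_natCast _
        have : ‖V.character a‖ = Module.finrank ℂ V := by rw [h1, h2]
        exact this
      obtain ⟨c, hc⟩ := end_scalar (V.ρ a) hm hfm htr
      rw [map_mul, map_mul, hc]
      rw [smul_mul_assoc, one_mul, mul_smul_comm, mul_one]
  -- commutators with commutator-subgroup elements lie in the kernel
  have hker : ∀ a ∈ commutator G, ∀ b : G, (b * a)⁻¹ * (a * b) ∈ repKer V := by
    intro a ha b
    have heq : Representation.asGroupHom V.ρ (a * b) = Representation.asGroupHom V.ρ (b * a) := by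
      apply Units.ext
      rw [Representation.asGroupHom_apply, Representation.asGroupHom_apply]
      exact hscal a ha b
    show (b * a)⁻¹ * (a * b) ∈ (Representation.asGroupHom V.ρ).ker
    rw [MonoidHom.mem_ker, map_mul, map_inv, heq, inv_mul_cancel]
  -- images of commutator-subgroup elements are central in the quotient
  have hcent : ∀ a ∈ commutator G,
      ((a : G ⧸ repKer V)) ∈ Subgroup.center (G ⧸ repKer V) := by
    intro a ha
    rw [Subgroup.mem_center_iff]
    intro q
    obtain ⟨b, rfl⟩ := QuotientGroup.mk_surjective q
    show ((b * a : G) : G ⧸ repKer V) = ((a * b : G) : G ⧸ repKer V)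
    rw [QuotientGroup.eq]
    exact hker a ha b
  -- conclude
  have h2 : (⊤ : Subgroup (G ⧸ repKer V)).lowerCentralSeries 2 = ⁅commutator (G ⧸ repKer V), ⊤⁆ := by
    rw [show (2 : ℕ) = 1 + 1 from rfl, Subgroup.lowerCentralSeries_succ, Subgroup.top_lowerCentralSeries_one]
  rw [h2]
  rw [eq_bot_iff]
  have hmapcomm : commutator (G ⧸ repKer V)
      = Subgroup.map (QuotientGroup.mk' (repKer V)) (commutator G) := by
    rw [commutator, commutator, Subgroup.map_commutator,
      Subgroup.map_top_of_surjective _ (QuotientGroup.mk'_surjective _)]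
  rw [Subgroup.commutator_le]
  intro x hx y _
  rw [Subgroup.mem_bot]
  rw [commutatorElement_eq_one_iff_commute]
  rw [hmapcomm] at hx
  obtain ⟨a, ha, rfl⟩ := hx
  have := hcent a ha
  rw [Subgroup.mem_center_iff] at this
  exact (this y).symm

end
end
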